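/- arXiv:1412.8552 — 2 statements merged into one kernel-verified Lean document; each statement's English description precedes it below -/
import Mathlib

section
/- Dropping a !-box preserves well-formedness: if G is a !-tensor expression then Drop_A(G) is a !-tensor expression, where Drop_A removes the box A but keeps its contents: Drop_A([G]_A) = G, Drop_A([e⟩_A) = e, Drop_A(⟨e]_A) = e, acting homomorphically otherwise. -/
namespace Bang

/-- Edgeterms: ε, directed edges â (out) and ǎ (inn), clockwise `[e⟩_A` and
anticlockwise `⟨e]_A` !-box edge groups, and concatenation. -/
inductive EdgeTerm (E B : Type) : Type
  | eps : EdgeTerm E B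
  | out (a : E) : EdgeTerm E B
  | inn (a : E) : EdgeTerm E B
  | cw (e : EdgeTerm E B) (A : B) : EdgeTerm E B
  | acw (e : EdgeTerm E B) (A : B) : EdgeTerm E B
  | cat (e f : EdgeTerm E B) : EdgeTerm E B

variable {E B S : Type}

/-- The smallest congruence on edgeterms generated by the unit laws for ε,
associativity of concatenation, and `[ε⟩_A ≡ ε ≡ ⟨ε]_A`. -/
inductive ETEquiv : EdgeTerm E B → EdgeTerm E B → Prop
  | refl (e) : ETEquiv e e
  | symm {e f} : ETEquiv e f → ETEquiv f e
  | trans {e f g} : ETEquiv e f → ETEquiv f g → ETEquiv e g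
  | catCongr {e e' f f'} : ETEquiv e e' → ETEquiv f f' → ETEquiv (.cat e f) (.cat e' f')
  | cwCongr (A) {e f} : ETEquiv e f → ETEquiv (.cw e A) (.cw f A)
  | acwCongr (A) {e f} : ETEquiv e f → ETEquiv (.acw e A) (.acw f A)
  | epsCat (e) : ETEquiv (.cat .eps e) e
  | catEps (e) : ETEquiv (.cat e .eps) e
  | assoc (e f g) : ETEquiv (.cat (.cat e f) g) (.cat e (.cat f g))
  | cwEps (A) : ETEquiv (.cw .eps A) .eps
  | acwEps (A) : ETEquiv (.acw .eps A) .eps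

/-- !-pretensor expressions: the trivial tensor 1, identity tensors `1_{â b̌}`,
atomic tensors `φ_e`, !-box wrapping `[G]_A` and products `G H`. -/
inductive Pretensor (E B S : Type) : Type
  | triv : Pretensor E B S
  | idt (a b : E) : Pretensor E B S
  | atom (φ : S) (e : EdgeTerm E B) : Pretensor E B S
  | box (G : Pretensor E B S) (A : B) : Pretensor E B S
  | prod (G H : Pretensor E B S) : Pretensor E B S

/-- Edge names occurring in an edgeterm. -/
def EdgeTerm.edgeSet : EdgeTerm E B → Set E
  | .eps => ∅
  | .out a => {a}
  | .inn a => {a}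
  | .cw e _ => e.edgeSet
  | .acw e _ => e.edgeSet
  | .cat e f => e.edgeSet ∪ f.edgeSet

/-- !-box names occurring in an edgeterm. -/
def EdgeTerm.boxSet : EdgeTerm E B → Set B
  | .eps => ∅
  | .out _ => ∅
  | .inn _ => ∅
  | .cw e A => e.boxSet ∪ {A}
  | .acw e A => e.boxSet ∪ {A}
  | .cat e f => e.boxSet ∪ f.boxSet

/-- Edges(G): edge names occurring in a !-pretensor expression. -/
def Pretensor.edgeSet : Pretensor E B S → Set E
  | .triv => ∅
  | .idt a b => {a, b}
  | .atom _ e => e.edgeSet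
  | .box G _ => G.edgeSet
  | .prod G H => G.edgeSet ∪ H.edgeSet

/-- Boxes(G): !-box names occurring in a !-pretensor expression. -/
def Pretensor.boxSet : Pretensor E B S → Set B
  | .triv => ∅
  | .idt _ _ => ∅
  | .atom _ e => e.boxSet
  | .box G A => G.boxSet ∪ {A}
  | .prod G H => G.boxSet ∪ H.boxSet

/-- Renaming of edge- and !-box names in an edgeterm. -/
def EdgeTerm.rename (fe : E → E) (fb : B → B) : EdgeTerm E B → EdgeTerm E B
  | .eps => .eps
  | .out a => .out (fe a)
  | .inn a => .inn (fe a)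
  | .cw e A => .cw (e.rename fe fb) (fb A)
  | .acw e A => .acw (e.rename fe fb) (fb A)
  | .cat e f => .cat (e.rename fe fb) (f.rename fe fb)

/-- Renaming of edge- and !-box names in a !-pretensor expression. -/
def Pretensor.rename (fe : E → E) (fb : B → B) : Pretensor E B S → Pretensor E B S
  | .triv => .triv
  | .idt a b => .idt (fe a) (fe b)
  | .atom φ e => .atom φ (e.rename fe fb)
  | .box G A => .box (G.rename fe fb) (fb A)
  | .prod G H => .prod (G.rename fe fb) (H.rename fe fb)

/-- A freshness function for `G`: a pair of bijections on edge names and on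
!-box names whose images of Edges(G), Boxes(G) are disjoint from those sets. -/
def IsFresh (fe : E → E) (fb : B → B) (G : Pretensor E B S) : Prop :=
  Function.Bijective fe ∧ Function.Bijective fb ∧
    G.edgeSet ∩ (fe '' G.edgeSet) = ∅ ∧ G.boxSet ∩ (fb '' G.boxSet) = ∅

section Ops

variable [DecidableEq E] [DecidableEq B]

/-- Occurrence of a directed edge (name, isOutput) in an edgeterm. -/
def EdgeTerm.occ : EdgeTerm E B → E × Bool → Bool
  | .eps, _ => false
  | .out a, d => decide (d = (a, true))
  | .inn a, d => decide (d = (a, false))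
  | .cw e _, d => e.occ d
  | .acw e _, d => e.occ d
  | .cat e f, d => e.occ d || f.occ d

/-- The edge context of a directed edge within an edgeterm (inside-out). -/
def EdgeTerm.ectx : EdgeTerm E B → E × Bool → List B
  | .eps, _ => []
  | .out _, _ => []
  | .inn _, _ => []
  | .cw e A, d => if e.occ d then e.ectx d ++ [A] else []
  | .acw e A, d => if e.occ d then e.ectx d ++ [A] else []
  | .cat e f, d => if e.occ d then e.ectx d else f.ectx d

/-- Occurrence of a directed edge in a !-pretensor expression. -/
def Pretensor.occ : Pretensor E B S → E × Bool → Bool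
  | .triv, _ => false
  | .idt a b, d => decide (d = (a, true)) || decide (d = (b, false))
  | .atom _ e, d => e.occ d
  | .box G _, d => G.occ d
  | .prod G H, d => G.occ d || H.occ d

/-- ectx_G(a): the !-boxes containing `a` that occur as part of its edgeterm. -/
def Pretensor.ectx : Pretensor E B S → E × Bool → List B
  | .triv, _ => []
  | .idt _ _, _ => []
  | .atom _ e, d => e.ectx d
  | .box G _, d => G.ectx d
  | .prod G H, d => if G.occ d then G.ectx d else H.ectx d

/-- nctx_G(a): the remaining !-boxes enclosing the node carrying `a` (inside-out). -/
def Pretensor.nctx : Pretensor E B S → E × Bool → List B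
  | .triv, _ => []
  | .idt _ _, _ => []
  | .atom _ _, _ => []
  | .box G A, d => if G.occ d then G.nctx d ++ [A] else []
  | .prod G H, d => if G.occ d then G.nctx d else H.nctx d

/-- ctx_G(a) = ectx_G(a).nctx_G(a). -/
def Pretensor.ctx (G : Pretensor E B S) (d : E × Bool) : List B := G.ectx d ++ G.nctx d

/-- Number of occurrences of a directed edge in an edgeterm. -/
def EdgeTerm.countD : EdgeTerm E B → E × Bool → Nat
  | .eps, _ => 0
  | .out a, d => if d = (a, true) then 1 else 0
  | .inn a, d => if d = (a, false) then 1 else 0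
  | .cw e _, d => e.countD d
  | .acw e _, d => e.countD d
  | .cat e f, d => e.countD d + f.countD d

/-- Number of occurrences of a directed edge in a !-pretensor expression. -/
def Pretensor.countD : Pretensor E B S → E × Bool → Nat
  | .triv, _ => 0
  | .idt a b, d => (if d = (a, true) then 1 else 0) + (if d = (b, false) then 1 else 0)
  | .atom _ e, d => e.countD d
  | .box G _, d => G.countD d
  | .prod G H, d => G.countD d + H.countD d

/-- Number of !-box wrappings `[...]_A` with the given name. -/
def Pretensor.countBox : Pretensor E B S → B → Nat
  | .triv, _ => 0
  | .idt _ _, _ => 0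
  | .atom _ _, _ => 0
  | .box G A, C => (if A = C then 1 else 0) + G.countBox C
  | .prod G H, C => G.countBox C + H.countBox C

/-- The !-boxes of a !-pretensor expression that are not nested inside any other box. -/
def Pretensor.topBoxes : Pretensor E B S → Set B
  | .box _ A => {A}
  | .prod G H => G.topBoxes ∪ H.topBoxes
  | _ => ∅

/-- The immediate nesting relation: `G.prec A C` means the !-box `A` is nested
directly inside the !-box `C` in `G` (no boxes between). -/
def Pretensor.prec : Pretensor E B S → B → B → Prop
  | .box H C, A, C' => (C' = C ∧ A ∈ H.topBoxes) ∨ H.prec A C'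
  | .prod G H, A, C' => G.prec A C' ∨ H.prec A C'
  | _, _, _ => False

/-- Well-formedness of a !-pretensor expression: the freshness conditions F1, F2
and the context conditions C1, C2, C3.  A !-tensor expression is a well-formed
!-pretensor expression. -/
def Pretensor.WF (G : Pretensor E B S) : Prop :=
  -- F1: each directed edge occurs at most once
  (∀ d : E × Bool, G.countD d ≤ 1) ∧
  -- F2: each !-box wrapping occurs at most once per name
  (∀ A : B, G.countBox A ≤ 1) ∧
  -- C1: edge context and node context are disjoint
  (∀ d : E × Bool, G.occ d = true → ∀ A ∈ G.ectx d, A ∉ G.nctx d) ∧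
  -- C2: edge contexts consist of boxes of G, consecutively nested
  (∀ d : E × Bool, G.occ d = true →
    (∀ A ∈ G.ectx d, 1 ≤ G.countBox A) ∧ (G.ectx d).Chain' G.prec) ∧
  -- C3: bound pairs have compatible contexts
  (∀ a : E, G.occ (a, true) = true → G.occ (a, false) = true →
    ∃ es bs : List B,
      es ++ G.nctx (a, false) = G.ectx (a, true) ++ bs ∧
      es ++ G.nctx (a, true) = G.ectx (a, false) ++ bs)

/-- Kill_A on edgeterms. -/
def EdgeTerm.kill (A : B) : EdgeTerm E B → EdgeTerm E B
  | .cw e C => if C = A then .eps else .cw (e.kill A) C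
  | .acw e C => if C = A then .eps else .acw (e.kill A) C
  | .cat e f => .cat (e.kill A) (f.kill A)
  | e => e

/-- Kill_A on !-pretensor expressions: deletes the box `A` and its contents. -/
def Pretensor.kill (A : B) : Pretensor E B S → Pretensor E B S
  | .box G C => if C = A then .triv else .box (G.kill A) C
  | .atom φ e => .atom φ (e.kill A)
  | .prod G H => .prod (G.kill A) (H.kill A)
  | G => G

/-- Drop_A on edgeterms. -/
def EdgeTerm.drop (A : B) : EdgeTerm E B → EdgeTerm E B
  | .cw e C => if C = A then e else .cw (e.drop A) C
  | .acw e C => if C = A then e else .acw (e.drop A) C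
  | .cat e f => .cat (e.drop A) (f.drop A)
  | e => e

/-- Drop_A on !-pretensor expressions: removes the box `A` keeping its contents. -/
def Pretensor.drop (A : B) : Pretensor E B S → Pretensor E B S
  | .box G C => if C = A then G else .box (G.drop A) C
  | .atom φ e => .atom φ (e.drop A)
  | .prod G H => .prod (G.drop A) (H.drop A)
  | G => G

/-- Exp_{A,fr} on edgeterms. -/
def EdgeTerm.exp (A : B) (fe : E → E) (fb : B → B) : EdgeTerm E B → EdgeTerm E B
  | .cw e C => if C = A then .cat (.cw e C) (e.rename fe fb) else .cw (e.exp A fe fb) C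
  | .acw e C => if C = A then .cat (e.rename fe fb) (.acw e C) else .acw (e.exp A fe fb) C
  | .cat e f => .cat (e.exp A fe fb) (f.exp A fe fb)
  | e => e

/-- Exp_{A,fr} on !-pretensor expressions: appends a fresh copy of the contents. -/
def Pretensor.exp (A : B) (fe : E → E) (fb : B → B) : Pretensor E B S → Pretensor E B S
  | .box G C => if C = A then .prod (.box G C) (G.rename fe fb) else .box (G.exp A fe fb) C
  | .atom φ e => .atom φ (e.exp A fe fb)
  | .prod G H => .prod (G.exp A fe fb) (H.exp A fe fb)
  | G => G

/-- Copy_{A,fr} on edgeterms. -/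
def EdgeTerm.copy (A : B) (fe : E → E) (fb : B → B) : EdgeTerm E B → EdgeTerm E B
  | .cw e C =>
      if C = A then .cat (.cw e C) (.cw (e.rename fe fb) (fb A)) else .cw (e.copy A fe fb) C
  | .acw e C =>
      if C = A then .cat (.acw (e.rename fe fb) (fb A)) (.acw e C) else .acw (e.copy A fe fb) C
  | .cat e f => .cat (e.copy A fe fb) (f.copy A fe fb)
  | e => e

/-- Copy_{A,fr} on !-pretensor expressions: appends a freshly-named boxed copy. -/
def Pretensor.copy (A : B) (fe : E → E) (fb : B → B) : Pretensor E B S → Pretensor E B S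
  | .box G C =>
      if C = A then .prod (.box G C) (.box (G.rename fe fb) (fb A)) else .box (G.copy A fe fb) C
  | .atom φ e => .atom φ (e.copy A fe fb)
  | .prod G H => .prod (G.copy A fe fb) (H.copy A fe fb)
  | G => G

/-- A generic !-box operation: one of Kill, Drop, Exp, Copy. -/
inductive BoxOp : Type
  | kill | drop | exp | copy

/-- Apply a !-box operation at box `A` with freshness data `fe`, `fb`
(ignored by Kill and Drop). -/
def BoxOp.apply : BoxOp → B → (E → E) → (B → B) → Pretensor E B S → Pretensor E B S
  | .kill, A, _, _, G => G.kill A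
  | .drop, A, _, _, G => G.drop A
  | .exp, A, fe, fb, G => G.exp A fe fb
  | .copy, A, fe, fb, G => G.copy A fe fb

/-- Renaming of a single directed edge name (`o = true`: outputs, `o = false`: inputs). -/
def EdgeTerm.renameDir (o : Bool) (b c : E) : EdgeTerm E B → EdgeTerm E B
  | .eps => .eps
  | .out a => if o = true ∧ a = b then .out c else .out a
  | .inn a => if o = false ∧ a = b then .inn c else .inn a
  | .cw e A => .cw (e.renameDir o b c) A
  | .acw e A => .acw (e.renameDir o b c) A
  | .cat e f => .cat (e.renameDir o b c) (f.renameDir o b c)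

/-- Renaming of a single directed edge name in a !-pretensor expression. -/
def Pretensor.renameDir (o : Bool) (b c : E) : Pretensor E B S → Pretensor E B S
  | .triv => .triv
  | .idt a a' =>
      .idt (if o = true ∧ a = b then c else a) (if o = false ∧ a' = b then c else a')
  | .atom φ e => .atom φ (e.renameDir o b c)
  | .box G A => .box (G.renameDir o b c) A
  | .prod G H => .prod (G.renameDir o b c) (H.renameDir o b c)

/-- !-tensor expression equivalence: generated by renaming of bound edge names,
associativity, commutativity and unit of the product, the identity-tensor
contraction laws, and edgeterm equivalences within atomic tensors. -/
inductive PTEquiv : Pretensor E B S → Pretensor E B S → Prop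
  | refl (G) : PTEquiv G G
  | symm {G H} : PTEquiv G H → PTEquiv H G
  | trans {G H K} : PTEquiv G H → PTEquiv H K → PTEquiv G K
  | prodCongr {G G' H H'} : PTEquiv G G' → PTEquiv H H' → PTEquiv (.prod G H) (.prod G' H')
  | boxCongr (A) {G H} : PTEquiv G H → PTEquiv (.box G A) (.box H A)
  | atomCongr (φ) {e f} : ETEquiv e f → PTEquiv (.atom φ e) (.atom φ f)
  | assoc (G H K) : PTEquiv (.prod (.prod G H) K) (.prod G (.prod H K))
  | comm (G H) : PTEquiv (.prod G H) (.prod H G)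
  | unit (G) : PTEquiv (.prod G .triv) G
  -- G · 1_{b̂ ǎ} ≡ G[b̌ ↦ ǎ], for b̌ free in G
  | contractIn (G : Pretensor E B S) (b a : E) :
      G.occ (b, false) = true → G.occ (b, true) = false →
      PTEquiv (.prod G (.idt b a)) (G.renameDir false b a)
  -- H · 1_{â b̌} ≡ H[b̂ ↦ â], for b̂ free in H
  | contractOut (H : Pretensor E B S) (b a : E) :
      H.occ (b, true) = true → H.occ (b, false) = false →
      PTEquiv (.prod H (.idt a b)) (H.renameDir true b a)
  -- renaming of a bound edge name to a fresh name
  | boundRename (G : Pretensor E B S) (b c : E) :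
      G.occ (b, true) = true → G.occ (b, false) = true →
      G.occ (c, true) = false → G.occ (c, false) = false →
      PTEquiv G ((G.renameDir true b c).renameDir false b c)

/-- A directed edge is free in G if it occurs but its partner does not. -/
def Pretensor.freeD (G : Pretensor E B S) (d : E × Bool) : Prop :=
  G.occ d = true ∧ G.occ (d.1, !d.2) = false

/-- `(G, H)` is a !-tensor equation: compatible boundaries, i.e. identical free
edge names, identical !-boxes with the same nesting relation, and equal
contexts on all free edges. -/
def TensorEq (G H : Pretensor E B S) : Prop :=
  (∀ d : E × Bool, G.freeD d ↔ H.freeD d) ∧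
  G.boxSet = H.boxSet ∧
  (∀ A C : B, G.prec A C ↔ H.prec A C) ∧
  (∀ d : E × Bool, G.freeD d → G.ctx d = H.ctx d)

end Ops

end Bang

set_option linter.dupNamespace false
set_option linter.unusedSectionVars false

namespace Bang

namespace DropAux

variable {β : Type} [DecidableEq β]

/-- Remove the last occurrence of `A` from a list. -/
def rL (A : β) (l : List β) : List β := (l.reverse.erase A).reverse

@[simp] lemma rL_nil (A : β) : rL A ([] : List β) = [] := rfl

lemma rL_of_not_mem {A : β} {l : List β} (h : A ∉ l) : rL A l = l := by
  have : A ∉ l.reverse := by simpa using h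
  simp [rL, List.erase_of_not_mem this]

lemma rL_append_right {A : β} (l1 : List β) {l2 : List β} (h : A ∈ l2) :
    rL A (l1 ++ l2) = l1 ++ rL A l2 := by
  have : A ∈ l2.reverse := by simpa using h
  simp [rL, List.erase_append_left _ this]

lemma rL_append_left {A : β} (l1 : List β) {l2 : List β} (h : A ∉ l2) :
    rL A (l1 ++ l2) = rL A l1 ++ l2 := by
  have : A ∉ l2.reverse := by simpa using h
  simp [rL, List.erase_append_right _ this]

@[simp] lemma rL_append_singleton (A : β) (l : List β) : rL A (l ++ [A]) = l := by
  simp [rL]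

lemma rL_cons_self {A : β} {l : List β} (h : A ∉ l) : rL A (A :: l) = l := by
  have : A ∉ l.reverse := by simpa using h
  simp [rL, List.erase_append_right _ this]

lemma rL_middle {A : β} (l1 : List β) {l2 : List β} (h : A ∉ l2) :
    rL A (l1 ++ A :: l2) = l1 ++ l2 := by
  rw [rL_append_right l1 (by simp), rL_cons_self h]

lemma mem_of_mem_rL {x A : β} {l : List β} (h : x ∈ rL A l) : x ∈ l := by
  simp only [rL, List.mem_reverse] at h
  exact List.mem_reverse.mp (List.mem_of_mem_erase h)

lemma length_rL_of_mem {A : β} {l : List β} (h : A ∈ l) : (rL A l).length = l.length - 1 := by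
  have : A ∈ l.reverse := by simpa using h
  simp [rL, List.length_erase_of_mem this]

lemma exists_decomp_of_count_le_one {A : β} {l : List β} (hm : A ∈ l) (hc : l.count A ≤ 1) :
    ∃ s t, l = s ++ A :: t ∧ A ∉ s ∧ A ∉ t := by
  obtain ⟨s, t, rfl⟩ := List.append_of_mem hm
  refine ⟨s, t, rfl, ?_, ?_⟩ <;> intro hmem
  · have h1 : 1 ≤ s.count A := List.one_le_count_iff.mpr hmem
    simp [List.count_append, List.count_cons_self] at hc
    omega
  · have h1 : 1 ≤ t.count A := List.one_le_count_iff.mpr hmem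
    simp [List.count_append, List.count_cons_self] at hc
    omega

lemma erase_eq_rL_of_count_le_one {A : β} {l : List β} (hc : l.count A ≤ 1) :
    l.erase A = rL A l := by
  by_cases hm : A ∈ l
  · obtain ⟨s, t, rfl, hs, ht⟩ := exists_decomp_of_count_le_one hm hc
    rw [List.erase_append_right _ hs, List.erase_cons_head, rL_middle _ ht]
  · rw [List.erase_of_not_mem hm, rL_of_not_mem hm]

lemma chain'_imp_mem {R R' : β → β → Prop} :
    ∀ {l : List β}, List.Chain' R l →
      (∀ x ∈ l, ∀ y ∈ l, R x y → R' x y) → List.Chain' R' l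
  | [], _, _ => List.isChain_nil
  | [a], _, _ => List.isChain_singleton a
  | a :: b :: l, h, himp => by
    simp only [List.Chain', List.isChain_cons_cons] at h ⊢
    refine ⟨himp a (by simp) b (by simp) h.1, chain'_imp_mem h.2 ?_⟩
    intro x hx y hy hr
    exact himp x (by simp [List.mem_cons] at hx ⊢; tauto) y
      (by simp [List.mem_cons] at hy ⊢; tauto) hr

lemma chain'_bridge {R R' : β → β → Prop} {A : β}
    (himp : ∀ x y, R x y → x ≠ A → y ≠ A → R' x y)
    (hbr : ∀ x y, R x A → R A y → R' x y) :
    ∀ (l1 : List β) {l2 : List β}, List.Chain' R (l1 ++ A :: l2) →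
      A ∉ l1 → A ∉ l2 → List.Chain' R' (l1 ++ l2)
  | [], l2, h, _, h2 => by
    simp only [List.nil_append] at h ⊢
    cases l2 with
    | nil => exact List.isChain_nil
    | cons y l2' =>
      exact chain'_imp_mem h.tail
        (fun x hx y' hy' hr => himp x y' hr
          (fun hxe => h2 (hxe ▸ hx)) (fun hye => h2 (hye ▸ hy')))
  | [x], l2, h, h1, h2 => by
    simp only [List.singleton_append, List.Chain', List.isChain_cons_cons] at h
    cases l2 with
    | nil => exact List.isChain_singleton x
    | cons y l2' =>
      simp only [List.singleton_append, List.Chain', List.isChain_cons_cons] at h ⊢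
      obtain ⟨hxA, h'⟩ := h
      refine ⟨hbr x y hxA h'.1, ?_⟩
      exact chain'_imp_mem h'.2
        (fun a ha b hb hr => himp a b hr
          (fun hae => h2 (by simpa [hae] using ha)) (fun hbe => h2 (by simpa [hbe] using hb)))
  | x :: z :: l1', l2, h, h1, h2 => by
    simp only [List.cons_append, List.Chain', List.isChain_cons_cons] at h ⊢
    refine ⟨himp x z h.1 (fun hx => h1 (by simp [hx])) (fun hz => h1 (by simp [hz])), ?_⟩
    exact chain'_bridge himp hbr (z :: l1') h.2 (fun hm => h1 (by simp at hm ⊢; tauto)) h2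

end DropAux

end Bang

namespace Bang

open DropAux

variable {E B S : Type} [DecidableEq E] [DecidableEq B]

namespace EdgeTerm

lemma occ_drop (A : B) : ∀ (e : EdgeTerm E B) (d : E × Bool), (e.drop A).occ d = e.occ d
  | .eps, _ => rfl
  | .out _, _ => rfl
  | .inn _, _ => rfl
  | .cw e C, d => by
      simp only [EdgeTerm.drop]; split_ifs <;> simp [EdgeTerm.occ, occ_drop A e d]
  | .acw e C, d => by
      simp only [EdgeTerm.drop]; split_ifs <;> simp [EdgeTerm.occ, occ_drop A e d]
  | .cat e f, d => by
      simp only [EdgeTerm.drop, EdgeTerm.occ, occ_drop A e d, occ_drop A f d]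

lemma countD_drop (A : B) : ∀ (e : EdgeTerm E B) (d : E × Bool),
    (e.drop A).countD d = e.countD d
  | .eps, _ => rfl
  | .out _, _ => rfl
  | .inn _, _ => rfl
  | .cw e C, d => by
      simp only [EdgeTerm.drop]; split_ifs <;> simp [EdgeTerm.countD, countD_drop A e d]
  | .acw e C, d => by
      simp only [EdgeTerm.drop]; split_ifs <;> simp [EdgeTerm.countD, countD_drop A e d]
  | .cat e f, d => by
      simp only [EdgeTerm.drop, EdgeTerm.countD, countD_drop A e d, countD_drop A f d]

lemma ectx_occ_false : ∀ (e : EdgeTerm E B) (d : E × Bool), e.occ d = false → e.ectx d = []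
  | .eps, _, _ => rfl
  | .out _, _, _ => rfl
  | .inn _, _, _ => rfl
  | .cw e C, d, h => by
      simp only [EdgeTerm.occ] at h
      simp [EdgeTerm.ectx, h]
  | .acw e C, d, h => by
      simp only [EdgeTerm.occ] at h
      simp [EdgeTerm.ectx, h]
  | .cat e f, d, h => by
      simp only [EdgeTerm.occ, Bool.or_eq_false_iff] at h
      simp [EdgeTerm.ectx, h.1, h.2, ectx_occ_false f d h.2]

lemma ectx_drop (A : B) : ∀ (e : EdgeTerm E B) (d : E × Bool),
    (e.drop A).ectx d = rL A (e.ectx d)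
  | .eps, _ => rfl
  | .out _, _ => rfl
  | .inn _, _ => rfl
  | .cw e C, d => by
      simp only [EdgeTerm.drop]
      split_ifs with hC
      · subst hC
        simp only [EdgeTerm.ectx]
        by_cases ho : e.occ d
        · simp [ho]
        · simp only [Bool.not_eq_true] at ho
          simp [ho, ectx_occ_false e d ho]
      · have hAC : A ∉ [C] := by
          simp only [List.mem_singleton]; exact fun h => hC h.symm
        simp only [EdgeTerm.ectx, occ_drop, ectx_drop A e d]
        by_cases ho : e.occ d
        · simp [ho, rL_append_left _ hAC]
        · simp only [Bool.not_eq_true] at ho; simp [ho]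
  | .acw e C, d => by
      simp only [EdgeTerm.drop]
      split_ifs with hC
      · subst hC
        simp only [EdgeTerm.ectx]
        by_cases ho : e.occ d
        · simp [ho]
        · simp only [Bool.not_eq_true] at ho
          simp [ho, ectx_occ_false e d ho]
      · have hAC : A ∉ [C] := by
          simp only [List.mem_singleton]; exact fun h => hC h.symm
        simp only [EdgeTerm.ectx, occ_drop, ectx_drop A e d]
        by_cases ho : e.occ d
        · simp [ho, rL_append_left _ hAC]
        · simp only [Bool.not_eq_true] at ho; simp [ho]
  | .cat e f, d => by
      simp only [EdgeTerm.drop, EdgeTerm.ectx, occ_drop, ectx_drop A e d, ectx_drop A f d]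
      by_cases ho : e.occ d <;> simp [ho]

end EdgeTerm

namespace Pretensor

lemma occ_drop (A : B) : ∀ (G : Pretensor E B S) (d : E × Bool), (G.drop A).occ d = G.occ d
  | .triv, _ => rfl
  | .idt _ _, _ => rfl
  | .atom φ e, d => EdgeTerm.occ_drop A e d
  | .box G C, d => by
      simp only [Pretensor.drop]; split_ifs <;> simp [Pretensor.occ, occ_drop A G d]
  | .prod G H, d => by
      simp only [Pretensor.drop, Pretensor.occ, occ_drop A G d, occ_drop A H d]

lemma countD_drop (A : B) : ∀ (G : Pretensor E B S) (d : E × Bool),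
    (G.drop A).countD d = G.countD d
  | .triv, _ => rfl
  | .idt _ _, _ => rfl
  | .atom φ e, d => EdgeTerm.countD_drop A e d
  | .box G C, d => by
      simp only [Pretensor.drop]; split_ifs <;> simp [Pretensor.countD, countD_drop A G d]
  | .prod G H, d => by
      simp only [Pretensor.drop, Pretensor.countD, countD_drop A G d, countD_drop A H d]

lemma countBox_drop_le (A : B) : ∀ (G : Pretensor E B S) (C : B),
    (G.drop A).countBox C ≤ G.countBox C
  | .triv, _ => le_refl _
  | .idt _ _, _ => le_refl _
  | .atom φ e, C => le_refl _
  | .box G C', C => by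
      simp only [Pretensor.drop]
      split_ifs with h
      · simp only [Pretensor.countBox]
        have := countBox_drop_le A G C
        omega
      · simp only [Pretensor.countBox]
        have := countBox_drop_le A G C
        omega
  | .prod G H, C => by
      simp only [Pretensor.drop, Pretensor.countBox]
      have := countBox_drop_le A G C
      have := countBox_drop_le A H C
      omega

lemma countBox_drop_ne (A : B) : ∀ (G : Pretensor E B S) {C : B}, C ≠ A →
    (G.drop A).countBox C = G.countBox C
  | .triv, _, _ => rfl
  | .idt _ _, _, _ => rfl
  | .atom φ e, C, _ => rfl
  | .box G C', C, h => by
      simp only [Pretensor.drop]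
      split_ifs with h'
      · subst h'
        simp only [Pretensor.countBox, if_neg (fun hh : C' = C => h (hh ▸ rfl))]
        omega
      · simp only [Pretensor.countBox, countBox_drop_ne A G h]
  | .prod G H, C, h => by
      simp only [Pretensor.drop, Pretensor.countBox, countBox_drop_ne A G h,
        countBox_drop_ne A H h]

lemma ectx_occ_false : ∀ (G : Pretensor E B S) (d : E × Bool), G.occ d = false → G.ectx d = []
  | .triv, _, _ => rfl
  | .idt _ _, _, _ => rfl
  | .atom φ e, d, h => EdgeTerm.ectx_occ_false e d h
  | .box G C, d, h => by
      simp only [Pretensor.occ] at h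
      exact ectx_occ_false G d h
  | .prod G H, d, h => by
      simp only [Pretensor.occ, Bool.or_eq_false_iff] at h
      simp [Pretensor.ectx, h.1, h.2, ectx_occ_false H d h.2]

lemma nctx_occ_false : ∀ (G : Pretensor E B S) (d : E × Bool), G.occ d = false → G.nctx d = []
  | .triv, _, _ => rfl
  | .idt _ _, _, _ => rfl
  | .atom _ _, _, _ => rfl
  | .box G C, d, h => by
      simp only [Pretensor.occ] at h
      simp [Pretensor.nctx, h]
  | .prod G H, d, h => by
      simp only [Pretensor.occ, Bool.or_eq_false_iff] at h
      simp [Pretensor.nctx, h.1, h.2, nctx_occ_false H d h.2]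

lemma nctx_drop (A : B) : ∀ (G : Pretensor E B S) (d : E × Bool),
    (G.drop A).nctx d = rL A (G.nctx d)
  | .triv, _ => rfl
  | .idt _ _, _ => rfl
  | .atom φ e, d => rfl
  | .box G C, d => by
      simp only [Pretensor.drop]
      split_ifs with hC
      · subst hC
        simp only [Pretensor.nctx]
        by_cases ho : G.occ d
        · simp [ho]
        · simp only [Bool.not_eq_true] at ho
          simp [ho, nctx_occ_false G d ho]
      · have hAC : A ∉ [C] := by
          simp only [List.mem_singleton]; exact fun h => hC h.symm
        simp only [Pretensor.nctx, occ_drop, nctx_drop A G d]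
        by_cases ho : G.occ d
        · simp [ho, rL_append_left _ hAC]
        · simp only [Bool.not_eq_true] at ho; simp [ho]
  | .prod G H, d => by
      simp only [Pretensor.drop, Pretensor.nctx, occ_drop, nctx_drop A G d, nctx_drop A H d]
      by_cases ho : G.occ d <;> simp [ho]

lemma ectx_drop (A : B) : ∀ (G : Pretensor E B S) (d : E × Bool),
    (G.drop A).ectx d = if A ∈ G.nctx d then G.ectx d else rL A (G.ectx d)
  | .triv, _ => rfl
  | .idt _ _, _ => rfl
  | .atom φ e, d => by
      simp [Pretensor.drop, Pretensor.ectx, Pretensor.nctx, EdgeTerm.ectx_drop A e d]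
  | .box G C, d => by
      by_cases hC : C = A
      · subst hC
        have hd : (G.box C).drop C = G := by simp [Pretensor.drop]
        rw [hd]
        simp only [Pretensor.ectx]
        by_cases ho : G.occ d
        · have hn : C ∈ (G.box C).nctx d := by simp [Pretensor.nctx, ho]
          rw [if_pos hn]
        · simp only [Bool.not_eq_true] at ho
          rw [ectx_occ_false G d ho]
          simp [Pretensor.nctx, ho]
      · have hAC : ¬A = C := fun h => hC h.symm
        have hd : (G.box C).drop A = (G.drop A).box C := by simp [Pretensor.drop, hC]
        rw [hd]
        simp only [Pretensor.ectx]
        rw [ectx_drop A G d]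
        by_cases ho : G.occ d
        · have hn : (G.box C).nctx d = G.nctx d ++ [C] := by simp [Pretensor.nctx, ho]
          have hiff : (A ∈ (G.box C).nctx d) ↔ A ∈ G.nctx d := by simp [hn, hAC]
          by_cases hm : A ∈ G.nctx d
          · rw [if_pos hm, if_pos (hiff.mpr hm)]
          · rw [if_neg hm, if_neg (fun hh => hm (hiff.mp hh))]
        · simp only [Bool.not_eq_true] at ho
          rw [ectx_occ_false G d ho, nctx_occ_false G d ho]
          simp [Pretensor.nctx, ho, ectx_occ_false G d ho]
  | .prod G H, d => by
      simp only [Pretensor.drop, Pretensor.ectx, Pretensor.nctx, occ_drop,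
        ectx_drop A G d, ectx_drop A H d]
      by_cases ho : G.occ d <;> simp [ho]

end Pretensor

end Bang

namespace Bang

open DropAux

variable {E B S : Type} [DecidableEq E] [DecidableEq B]

namespace Pretensor

lemma countBox_of_mem_topBoxes : ∀ {G : Pretensor E B S} {X : B},
    X ∈ G.topBoxes → 1 ≤ G.countBox X
  | .triv, _, h => h.elim
  | .idt _ _, _, h => h.elim
  | .atom _ _, _, h => h.elim
  | .box G C, X, h => by
      simp only [Pretensor.topBoxes, Set.mem_singleton_iff] at h
      simp only [Pretensor.countBox, if_pos h.symm]
      omega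
  | .prod G H, X, h => by
      simp only [Pretensor.topBoxes, Set.mem_union] at h
      simp only [Pretensor.countBox]
      rcases h with h | h
      · have := countBox_of_mem_topBoxes h; omega
      · have := countBox_of_mem_topBoxes h; omega

lemma countBox_of_prec : ∀ {G : Pretensor E B S} {X Y : B}, G.prec X Y →
    1 ≤ G.countBox X ∧ 1 ≤ G.countBox Y
  | .triv, _, _, h => h.elim
  | .idt _ _, _, _, h => h.elim
  | .atom _ _, _, _, h => h.elim
  | .box H C, X, Y, hp => by
      simp only [Pretensor.prec] at hp
      simp only [Pretensor.countBox]
      rcases hp with ⟨hYC, hX⟩ | hp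
      · have := countBox_of_mem_topBoxes hX
        constructor
        · omega
        · rw [if_pos hYC.symm]; omega
      · have := countBox_of_prec hp
        constructor
        · omega
        · omega
  | .prod G H, X, Y, hp => by
      simp only [Pretensor.prec] at hp
      simp only [Pretensor.countBox]
      rcases hp with hp | hp
      · have := countBox_of_prec hp
        omega
      · have := countBox_of_prec hp
        omega

/-- Nesting depth of the (unique) box named `X`. -/
def bdepth : Pretensor E B S → B → Nat
  | .box H C, X => if C = X then 0 else if 1 ≤ H.countBox X then bdepth H X + 1 else 0
  | .prod G H, X => if 1 ≤ G.countBox X then bdepth G X else bdepth H X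
  | _, _ => 0

lemma countBox_le_of_box {H : Pretensor E B S} {C : B}
    (h2 : ∀ C', (H.box C).countBox C' ≤ 1) : ∀ C', H.countBox C' ≤ 1 := fun C' => by
  have := h2 C'
  simp only [Pretensor.countBox] at this
  omega

lemma countBox_le_of_prod_left {G H : Pretensor E B S}
    (h2 : ∀ C', (G.prod H).countBox C' ≤ 1) : ∀ C', G.countBox C' ≤ 1 := fun C' => by
  have := h2 C'
  simp only [Pretensor.countBox] at this
  omega

lemma countBox_le_of_prod_right {G H : Pretensor E B S}
    (h2 : ∀ C', (G.prod H).countBox C' ≤ 1) : ∀ C', H.countBox C' ≤ 1 := fun C' => by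
  have := h2 C'
  simp only [Pretensor.countBox] at this
  omega

lemma bdepth_of_mem_topBoxes : ∀ {G : Pretensor E B S}, (∀ C, G.countBox C ≤ 1) →
    ∀ {X : B}, X ∈ G.topBoxes → G.bdepth X = 0
  | .triv, _, _, h => h.elim
  | .idt _ _, _, _, h => h.elim
  | .atom _ _, _, _, h => h.elim
  | .box G C, h2, X, hX => by
      simp only [Pretensor.topBoxes, Set.mem_singleton_iff] at hX
      simp [bdepth, hX.symm]
  | .prod G H, h2, X, hX => by
      simp only [Pretensor.topBoxes, Set.mem_union] at hX
      rcases hX with hX | hX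
      · have h1 := countBox_of_mem_topBoxes hX
        simp [bdepth, h1, bdepth_of_mem_topBoxes (countBox_le_of_prod_left h2) hX]
      · have h1 := countBox_of_mem_topBoxes hX
        have h0 : G.countBox X = 0 := by
          have := h2 X; simp only [Pretensor.countBox] at this; omega
        simp [bdepth, h0, bdepth_of_mem_topBoxes (countBox_le_of_prod_right h2) hX]

lemma bdepth_of_prec : ∀ {G : Pretensor E B S}, (∀ C, G.countBox C ≤ 1) →
    ∀ {X Y : B}, G.prec X Y → G.bdepth X = G.bdepth Y + 1
  | .triv, _, _, _, h => h.elim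
  | .idt _ _, _, _, _, h => h.elim
  | .atom _ _, _, _, _, h => h.elim
  | .box H C, h2, X, Y, hp => by
      have h2H := countBox_le_of_box h2
      simp only [Pretensor.prec] at hp
      rcases hp with ⟨hYC, hX⟩ | hp
      · have h1 := countBox_of_mem_topBoxes hX
        have hXC : ¬C = X := by
          intro h
          have := h2 X
          simp only [Pretensor.countBox, if_pos h] at this
          omega
        subst hYC
        simp [bdepth, hXC, h1, bdepth_of_mem_topBoxes h2H hX]
      · have h1 := countBox_of_prec hp
        have hXC : ¬C = X := by
          intro h
          have := h2 X
          simp only [Pretensor.countBox, if_pos h] at this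
          omega
        have hYC : ¬C = Y := by
          intro h
          have := h2 Y
          simp only [Pretensor.countBox, if_pos h] at this
          omega
        simp [bdepth, hXC, hYC, h1.1, h1.2, bdepth_of_prec h2H hp]
  | .prod G H, h2, X, Y, hp => by
      simp only [Pretensor.prec] at hp
      rcases hp with hp | hp
      · have h1 := countBox_of_prec hp
        simp [bdepth, h1.1, h1.2, bdepth_of_prec (countBox_le_of_prod_left h2) hp]
      · have h1 := countBox_of_prec hp
        have h0X : G.countBox X = 0 := by
          have := h2 X; simp only [Pretensor.countBox] at this; omega
        have h0Y : G.countBox Y = 0 := by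
          have := h2 Y; simp only [Pretensor.countBox] at this; omega
        simp [bdepth, h0X, h0Y, bdepth_of_prec (countBox_le_of_prod_right h2) hp]

lemma nodup_of_chain'_prec {G : Pretensor E B S} (h2 : ∀ C, G.countBox C ≤ 1)
    {l : List B} (hc : List.Chain' G.prec l) : l.Nodup := by
  have hc' : List.Chain' (fun x y : B => G.bdepth y < G.bdepth x) l :=
    List.IsChain.imp (fun a b h => by rw [bdepth_of_prec h2 h]; omega) hc
  have hm : List.Chain' (fun a b : Nat => b < a) (l.map G.bdepth) := by
    simp only [List.Chain', List.isChain_map]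
    exact hc'
  have hnd : (l.map G.bdepth).Nodup := by
    have hp := List.isChain_iff_pairwise.mp hm
    exact hp.imp (fun h => (Nat.ne_of_lt h).symm)
  exact hnd.of_map _

lemma count_nctx_le_countBox (A : B) : ∀ (G : Pretensor E B S) (d : E × Bool),
    (G.nctx d).count A ≤ G.countBox A
  | .triv, d => by simp [Pretensor.nctx, Pretensor.countBox]
  | .idt _ _, d => by simp [Pretensor.nctx, Pretensor.countBox]
  | .atom _ _, d => by simp [Pretensor.nctx, Pretensor.countBox]
  | .box G C, d => by
      simp only [Pretensor.nctx, Pretensor.countBox]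
      have hrec := count_nctx_le_countBox A G d
      by_cases ho : G.occ d
      · rw [if_pos ho, List.count_append]
        by_cases hCA : C = A
        · subst hCA
          rw [if_pos rfl]
          simp [List.count_singleton]
          omega
        · have : List.count A [C] = 0 := by
            rw [List.count_eq_zero]
            simp only [List.mem_singleton]
            exact fun h => hCA h.symm
          rw [this, if_neg hCA]
          omega
      · rw [if_neg ho]
        simp only [List.count_nil]
        omega
  | .prod G H, d => by
      simp only [Pretensor.nctx, Pretensor.countBox]
      have hG := count_nctx_le_countBox A G d
      have hH := count_nctx_le_countBox A H d
      by_cases ho : G.occ d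
      · rw [if_pos ho]; omega
      · rw [if_neg ho]; omega

lemma mem_topBoxes_drop_of_ne (A : B) : ∀ {G : Pretensor E B S} {X : B},
    X ∈ G.topBoxes → X ≠ A → X ∈ (G.drop A).topBoxes
  | .triv, _, h, _ => h.elim
  | .idt _ _, _, h, _ => h.elim
  | .atom _ _, _, h, _ => h.elim
  | .box G C, X, hX, hne => by
      simp only [Pretensor.topBoxes, Set.mem_singleton_iff] at hX
      subst hX
      rw [show (G.box X).drop A = (G.drop A).box X from by simp [Pretensor.drop, hne]]
      simp [Pretensor.topBoxes]
  | .prod G H, X, hX, hne => by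
      simp only [Pretensor.topBoxes, Set.mem_union] at hX
      rw [show (G.prod H).drop A = (G.drop A).prod (H.drop A) from by simp [Pretensor.drop]]
      simp only [Pretensor.topBoxes, Set.mem_union]
      rcases hX with h | h
      · exact Or.inl (mem_topBoxes_drop_of_ne A h hne)
      · exact Or.inr (mem_topBoxes_drop_of_ne A h hne)

lemma mem_topBoxes_drop_of_prec (A : B) : ∀ {G : Pretensor E B S},
    (∀ C, G.countBox C ≤ 1) → A ∈ G.topBoxes → ∀ {X : B}, G.prec X A →
    X ∈ (G.drop A).topBoxes
  | .triv, _, h, _, _ => h.elim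
  | .idt _ _, _, h, _, _ => h.elim
  | .atom _ _, _, h, _, _ => h.elim
  | .box H C, h2, hA, X, hp => by
      simp only [Pretensor.topBoxes, Set.mem_singleton_iff] at hA
      simp only [Pretensor.prec] at hp
      rw [show (H.box C).drop A = H from by simp [Pretensor.drop, hA.symm]]
      rcases hp with ⟨-, hX⟩ | hp
      · exact hX
      · exfalso
        have h1 := (countBox_of_prec hp).2
        have h2A := h2 A
        simp only [Pretensor.countBox, if_pos hA.symm] at h2A
        omega
  | .prod G H, h2, hA, X, hp => by
      simp only [Pretensor.topBoxes, Set.mem_union] at hA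
      simp only [Pretensor.prec] at hp
      rw [show (G.prod H).drop A = (G.drop A).prod (H.drop A) from by simp [Pretensor.drop]]
      simp only [Pretensor.topBoxes, Set.mem_union]
      rcases hA with hA | hA <;> rcases hp with hp | hp
      · exact Or.inl (mem_topBoxes_drop_of_prec A (countBox_le_of_prod_left h2) hA hp)
      · exfalso
        have h1 := countBox_of_mem_topBoxes hA
        have h1' := (countBox_of_prec hp).2
        have := h2 A
        simp only [Pretensor.countBox] at this
        omega
      · exfalso
        have h1 := countBox_of_mem_topBoxes hA
        have h1' := (countBox_of_prec hp).2
        have := h2 A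
        simp only [Pretensor.countBox] at this
        omega
      · exact Or.inr (mem_topBoxes_drop_of_prec A (countBox_le_of_prod_right h2) hA hp)

lemma prec_drop (A : B) : ∀ {G : Pretensor E B S} {X Y : B},
    G.prec X Y → X ≠ A → Y ≠ A → (G.drop A).prec X Y
  | .triv, _, _, h, _, _ => h.elim
  | .idt _ _, _, _, h, _, _ => h.elim
  | .atom _ _, _, _, h, _, _ => h.elim
  | .box H C, X, Y, hp, hX, hY => by
      simp only [Pretensor.prec] at hp
      by_cases hC : C = A
      · rw [show (H.box C).drop A = H from by simp [Pretensor.drop, hC]]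
        rcases hp with ⟨hYC, -⟩ | hp
        · exact absurd (hYC.trans hC) hY
        · exact hp
      · rw [show (H.box C).drop A = (H.drop A).box C from by simp [Pretensor.drop, hC]]
        simp only [Pretensor.prec]
        rcases hp with ⟨hYC, hX'⟩ | hp
        · exact Or.inl ⟨hYC, mem_topBoxes_drop_of_ne A hX' hX⟩
        · exact Or.inr (prec_drop A hp hX hY)
  | .prod G H, X, Y, hp, hX, hY => by
      simp only [Pretensor.prec] at hp
      rw [show (G.prod H).drop A = (G.drop A).prod (H.drop A) from by simp [Pretensor.drop]]
      simp only [Pretensor.prec]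
      rcases hp with hp | hp
      · exact Or.inl (prec_drop A hp hX hY)
      · exact Or.inr (prec_drop A hp hX hY)

lemma prec_drop_comp (A : B) : ∀ {G : Pretensor E B S},
    (∀ C, G.countBox C ≤ 1) → ∀ {X Y : B}, G.prec X A → G.prec A Y → X ≠ A → Y ≠ A →
    (G.drop A).prec X Y
  | .triv, _, _, _, h, _, _, _ => h.elim
  | .idt _ _, _, _, _, h, _, _, _ => h.elim
  | .atom _ _, _, _, _, h, _, _, _ => h.elim
  | .box H C, h2, X, Y, hpX, hpY, hX, hY => by
      have h2H := countBox_le_of_box h2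
      simp only [Pretensor.prec] at hpX hpY
      by_cases hC : C = A
      · exfalso
        rcases hpY with ⟨hYC, -⟩ | hpY
        · exact hY (hYC.trans hC)
        · have h1 := (countBox_of_prec hpY).1
          have h2A := h2 A
          simp only [Pretensor.countBox, if_pos hC] at h2A
          omega
      · rw [show (H.box C).drop A = (H.drop A).box C from by simp [Pretensor.drop, hC]]
        simp only [Pretensor.prec]
        rcases hpX with ⟨hAC, -⟩ | hpX
        · exact absurd hAC.symm hC
        · rcases hpY with ⟨hYC, hA⟩ | hpY
          · exact Or.inl ⟨hYC, mem_topBoxes_drop_of_prec A h2H hA hpX⟩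
          · exact Or.inr (prec_drop_comp A h2H hpX hpY hX hY)
  | .prod G H, h2, X, Y, hpX, hpY, hX, hY => by
      simp only [Pretensor.prec] at hpX hpY
      rw [show (G.prod H).drop A = (G.drop A).prod (H.drop A) from by simp [Pretensor.drop]]
      simp only [Pretensor.prec]
      rcases hpX with hpX | hpX <;> rcases hpY with hpY | hpY
      · exact Or.inl (prec_drop_comp A (countBox_le_of_prod_left h2) hpX hpY hX hY)
      · exfalso
        have h1 := (countBox_of_prec hpX).2
        have h1' := (countBox_of_prec hpY).1
        have := h2 A
        simp only [Pretensor.countBox] at this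
        omega
      · exfalso
        have h1 := (countBox_of_prec hpX).2
        have h1' := (countBox_of_prec hpY).1
        have := h2 A
        simp only [Pretensor.countBox] at this
        omega
      · exact Or.inr (prec_drop_comp A (countBox_le_of_prod_right h2) hpX hpY hX hY)

end Pretensor

end Bang

namespace Bang

namespace DropAux

variable {β : Type} [DecidableEq β]

lemma count_one_of_mem {A : β} {l : List β} (h : A ∈ l) (h1 : l.count A ≤ 1) :
    l.count A = 1 :=
  le_antisymm h1 (List.one_le_count_iff.mpr h)

lemma core (A : β) (e_t n_t e_f n_f : List β)
    (hdt : A ∈ n_t → A ∉ e_t) (hdf : A ∈ n_f → A ∉ e_f)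
    (hnt1 : n_t.count A ≤ 1) (hnf1 : n_f.count A ≤ 1)
    (het1 : e_t.count A ≤ 1) (hef1 : e_f.count A ≤ 1)
    (hcase : A ∈ n_t ∨ A ∉ n_f) :
    ∀ n (es bs : List β), es.length ≤ n →
      es ++ n_f = e_t ++ bs → es ++ n_t = e_f ++ bs →
      ∃ es' bs', es' ++ rL A n_f = (if A ∈ n_t then e_t else rL A e_t) ++ bs' ∧
        es' ++ rL A n_t = (if A ∈ n_f then e_f else rL A e_f) ++ bs' := by
  intro n
  induction n using Nat.strong_induction_on with
  | _ n IH =>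
  intro es bs hlen h1 h2
  have c1 := congrArg (List.count A) h1
  have c2 := congrArg (List.count A) h2
  simp only [List.count_append] at c1 c2
  by_cases hAt : A ∈ n_t
  · -- A ∈ n_t, hence A ∉ e_t
    have hAet : A ∉ e_t := hdt hAt
    have hetc : e_t.count A = 0 := List.count_eq_zero.mpr hAet
    have hntc : n_t.count A = 1 := count_one_of_mem hAt hnt1
    by_cases hAf : A ∈ n_f
    · -- case (1,1)
      have hAef : A ∉ e_f := hdf hAf
      have hnfc : n_f.count A = 1 := count_one_of_mem hAf hnf1
      have hefc : e_f.count A = 0 := List.count_eq_zero.mpr hAef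
      have hAbs : A ∈ bs := List.one_le_count_iff.mp (by omega)
      refine ⟨es, rL A bs, ?_, ?_⟩
      · rw [if_pos hAt, ← rL_append_right es hAf, h1, rL_append_right e_t hAbs]
      · rw [if_pos hAf, ← rL_append_right es hAt, h2, rL_append_right e_f hAbs]
    · -- case (1,0)
      have hnfc : n_f.count A = 0 := List.count_eq_zero.mpr hAf
      have hefc : e_f.count A = 1 := by omega
      have hAef : A ∈ e_f := List.one_le_count_iff.mp (by omega)
      rcases List.append_eq_append_iff.mp h2 with ⟨m, hm1, hm2⟩ | ⟨v, hv1, hv2⟩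
      · -- e_f = es ++ m, n_t = m ++ bs
        have cm : m.count A + bs.count A = 1 := by
          have := congrArg (List.count A) hm2
          simp only [List.count_append] at this
          omega
        by_cases hAbs : A ∈ bs
        · have hbsc : bs.count A = 1 := count_one_of_mem hAbs (by omega)
          have hmc : m.count A = 0 := by omega
          have hAm : A ∉ m := by rw [← List.count_eq_zero]; exact hmc
          have hAes : A ∈ es := List.one_le_count_iff.mp (by omega)
          refine ⟨rL A es, rL A bs, ?_, ?_⟩
          · rw [if_pos hAt, rL_of_not_mem hAf, ← rL_append_left es hAf, h1,
              rL_append_right e_t hAbs]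
          · rw [if_neg hAf, hm2, rL_append_right m hAbs, hm1, rL_append_left es hAm,
              List.append_assoc]
        · have hmc : m.count A = 1 := by
            have : bs.count A = 0 := List.count_eq_zero.mpr hAbs
            omega
          have hAm : A ∈ m := List.one_le_count_iff.mp (by omega)
          refine ⟨es, bs, ?_, ?_⟩
          · rw [if_pos hAt, rL_of_not_mem hAf]; exact h1
          · rw [if_neg hAf, hm2, rL_append_left m hAbs, hm1, rL_append_right es hAm,
              List.append_assoc]
      · -- es = e_f ++ v, bs = v ++ n_t
        subst hv1 hv2
        have h1' : e_f ++ (v ++ n_f) = e_t ++ (v ++ n_t) := by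
          simpa [List.append_assoc] using h1
        by_cases hAv : A ∈ v
        · -- k ≥ 1 : need e_f = e_t ++ y
          rcases List.append_eq_append_iff.mp h1' with ⟨w, hw1, hw2⟩ | ⟨y, hy1, hy2⟩
          · exact absurd (hw1 ▸ (List.mem_append.mpr (Or.inl hAef))) hAet
          · have hyc : y.count A = 1 := by
              have := congrArg (List.count A) hy1
              simp only [List.count_append] at this
              omega
            rcases List.append_eq_append_iff.mp hy2 with ⟨z, hz1, hz2⟩ | ⟨v2, hv21, hv22⟩
            · -- y = v ++ z, n_t = z ++ (v ++ n_f) : base case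
              have hvz : v.count A + z.count A = 1 := by
                have := congrArg (List.count A) hz1
                simp only [List.count_append] at this
                omega
              have hvc : v.count A = 1 := count_one_of_mem hAv (by omega)
              have hAz : A ∉ z := by
                rw [← List.count_eq_zero]; omega
              refine ⟨e_t ++ rL A v, rL A v ++ n_f, ?_, ?_⟩
              · rw [if_pos hAt, rL_of_not_mem hAf, List.append_assoc]
              · rw [if_neg hAf, hz2, hy1, hz1]
                rw [rL_append_right z (show A ∈ v ++ n_f from List.mem_append.mpr (Or.inl hAv)),
                  rL_append_left v hAf]
                rw [rL_append_right e_t (show A ∈ v ++ z from List.mem_append.mpr (Or.inl hAv)),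
                  rL_append_left v hAz]
                simp [List.append_assoc]
            · -- v = y ++ v2 : reduction step
              have hv22' : y ++ (v2 ++ n_f) = v2 ++ n_t := by
                rw [hv21] at hv22
                simpa [List.append_assoc] using hv22
              have h1₂ : (e_f ++ v2) ++ n_f = e_t ++ (v2 ++ n_t) := by
                rw [hy1, ← hv22']
                simp [List.append_assoc]
              have h2₂ : (e_f ++ v2) ++ n_t = e_f ++ (v2 ++ n_t) := by
                simp [List.append_assoc]
              have hy_ne : y ≠ [] := by
                intro h
                rw [h] at hyc
                simp at hyc
              have hlt : (e_f ++ v2).length < (e_f ++ v).length := by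
                rw [hv21]
                simp only [List.length_append]
                have : 0 < y.length := List.length_pos_iff.mpr hy_ne
                omega
              exact IH (e_f ++ v2).length (by omega) (e_f ++ v2) (v2 ++ n_t) le_rfl h1₂ h2₂
        · -- A ∉ v : erase-first argument
          have hef_erase : (e_f ++ (v ++ n_f)).erase A = rL A e_f ++ (v ++ n_f) := by
            rw [List.erase_append_left _ hAef, erase_eq_rL_of_count_le_one hef1]
          have hrhs : (e_t ++ (v ++ n_t)).erase A = e_t ++ (v ++ rL A n_t) := by
            rw [List.erase_append_right _ hAet, List.erase_append_right _ hAv,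
              erase_eq_rL_of_count_le_one hnt1]
          have key : rL A e_f ++ (v ++ n_f) = e_t ++ (v ++ rL A n_t) := by
            rw [← hef_erase, h1', hrhs]
          refine ⟨rL A e_f ++ v, v ++ rL A n_t, ?_, ?_⟩
          · rw [if_pos hAt, rL_of_not_mem hAf]
            simpa [List.append_assoc] using key
          · rw [if_neg hAf]
            simp [List.append_assoc]
  · -- A ∉ n_t
    have hAf : A ∉ n_f := by
      rcases hcase with h | h
      · exact absurd h hAt
      · exact h
    have hntc : n_t.count A = 0 := List.count_eq_zero.mpr hAt
    have hnfc : n_f.count A = 0 := List.count_eq_zero.mpr hAf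
    by_cases hAet : A ∈ e_t
    · have hetc : e_t.count A = 1 := count_one_of_mem hAet het1
      have hefc : e_f.count A = 1 := by omega
      have hAes : A ∈ es := List.one_le_count_iff.mp (by omega)
      by_cases hAbs : A ∈ bs
      · -- reduce
        have h1' : rL A es ++ n_f = e_t ++ rL A bs := by
          rw [← rL_append_left es hAf, h1, rL_append_right e_t hAbs]
        have h2' : rL A es ++ n_t = e_f ++ rL A bs := by
          rw [← rL_append_left es hAt, h2, rL_append_right e_f hAbs]
        have hlt : (rL A es).length < es.length := by
          rw [length_rL_of_mem hAes]
          have : 0 < es.length := List.length_pos_iff.mpr (List.ne_nil_of_mem hAes)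
          omega
        exact IH (rL A es).length (by omega) (rL A es) (rL A bs) le_rfl h1' h2'
      · refine ⟨rL A es, bs, ?_, ?_⟩
        · rw [if_neg hAt, rL_of_not_mem hAf, ← rL_append_left es hAf, h1,
            rL_append_left e_t hAbs]
        · rw [if_neg hAf, rL_of_not_mem hAt, ← rL_append_left es hAt, h2,
            rL_append_left e_f hAbs]
    · have hetc : e_t.count A = 0 := List.count_eq_zero.mpr hAet
      have hefc : e_f.count A = 0 := by omega
      have hAef : A ∉ e_f := by rw [← List.count_eq_zero]; exact hefc
      refine ⟨es, bs, ?_, ?_⟩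
      · rw [if_neg hAt, rL_of_not_mem hAf, rL_of_not_mem hAet]; exact h1
      · rw [if_neg hAf, rL_of_not_mem hAt, rL_of_not_mem hAef]; exact h2

end DropAux

end Bang

open Bang

/-- Drop_A preserves well-formedness of !-tensor expressions. -/
theorem drop_preserves_wf {E B S : Type} [DecidableEq E] [DecidableEq B]
    (G : Pretensor E B S) (hG : G.WF) (A : B) : (G.drop A).WF := by
  obtain ⟨hF1, hF2, hC1, hC2, hC3⟩ := hG
  have hprec_ne : ∀ {x y : B}, G.prec x y → x ≠ y := by
    intro x y h heq
    have := Pretensor.bdepth_of_prec hF2 h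
    rw [heq] at this
    omega
  refine ⟨?_, ?_, ?_, ?_, ?_⟩
  · -- F1
    intro d
    rw [Pretensor.countD_drop]
    exact hF1 d
  · -- F2
    intro C
    exact le_trans (Pretensor.countBox_drop_le A G C) (hF2 C)
  · -- C1
    intro d hocc C hCe hCn
    rw [Pretensor.occ_drop] at hocc
    rw [Pretensor.nctx_drop] at hCn
    rw [Pretensor.ectx_drop] at hCe
    have hCe' : C ∈ G.ectx d := by
      by_cases hm : A ∈ G.nctx d
      · rw [if_pos hm] at hCe; exact hCe
      · rw [if_neg hm] at hCe; exact DropAux.mem_of_mem_rL hCe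
    exact hC1 d hocc C hCe' (DropAux.mem_of_mem_rL hCn)
  · -- C2
    intro d hocc
    rw [Pretensor.occ_drop] at hocc
    obtain ⟨hcnt, hchain⟩ := hC2 d hocc
    have hnodup : (G.ectx d).Nodup := Pretensor.nodup_of_chain'_prec hF2 hchain
    rw [Pretensor.ectx_drop]
    by_cases hm : A ∈ G.nctx d
    · rw [if_pos hm]
      have hAe : A ∉ G.ectx d := fun hAe => hC1 d hocc A hAe hm
      refine ⟨?_, ?_⟩
      · intro C hC
        have hCA : C ≠ A := fun h => hAe (h ▸ hC)
        rw [Pretensor.countBox_drop_ne A G hCA]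
        exact hcnt C hC
      · exact DropAux.chain'_imp_mem hchain (fun x hx y hy hr =>
          Pretensor.prec_drop A hr (fun h => hAe (h ▸ hx)) (fun h => hAe (h ▸ hy)))
    · rw [if_neg hm]
      by_cases hAe : A ∈ G.ectx d
      · have hcount1 : (G.ectx d).count A ≤ 1 := List.nodup_iff_count_le_one.mp hnodup A
        obtain ⟨l1, l2, hdec, hA1, hA2⟩ := DropAux.exists_decomp_of_count_le_one hAe hcount1
        rw [hdec, DropAux.rL_middle l1 hA2]
        refine ⟨?_, ?_⟩
        · intro C hC
          rw [List.mem_append] at hC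
          have hCmem : C ∈ G.ectx d := by
            rw [hdec, List.mem_append, List.mem_cons]
            tauto
          have hCA : C ≠ A := by
            rintro rfl
            rcases hC with h | h
            · exact hA1 h
            · exact hA2 h
          rw [Pretensor.countBox_drop_ne A G hCA]
          exact hcnt C hCmem
        · rw [hdec] at hchain
          exact DropAux.chain'_bridge
            (fun x y hr hx hy => Pretensor.prec_drop A hr hx hy)
            (fun x y hx hy =>
              Pretensor.prec_drop_comp A hF2 hx hy (hprec_ne hx) (fun h => hprec_ne hy h.symm))
            l1 hchain hA1 hA2
      · rw [DropAux.rL_of_not_mem hAe]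
        refine ⟨?_, ?_⟩
        · intro C hC
          have hCA : C ≠ A := fun h => hAe (h ▸ hC)
          rw [Pretensor.countBox_drop_ne A G hCA]
          exact hcnt C hC
        · exact DropAux.chain'_imp_mem hchain (fun x hx y hy hr =>
            Pretensor.prec_drop A hr (fun h => hAe (h ▸ hx)) (fun h => hAe (h ▸ hy)))
  · -- C3
    intro a hot hof
    rw [Pretensor.occ_drop] at hot hof
    obtain ⟨es, bs, h1, h2⟩ := hC3 a hot hof
    have hdt : A ∈ G.nctx (a, true) → A ∉ G.ectx (a, true) :=
      fun hm hAe => hC1 (a, true) hot A hAe hm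
    have hdf : A ∈ G.nctx (a, false) → A ∉ G.ectx (a, false) :=
      fun hm hAe => hC1 (a, false) hof A hAe hm
    have hnt1 : (G.nctx (a, true)).count A ≤ 1 :=
      le_trans (Pretensor.count_nctx_le_countBox A G (a, true)) (hF2 A)
    have hnf1 : (G.nctx (a, false)).count A ≤ 1 :=
      le_trans (Pretensor.count_nctx_le_countBox A G (a, false)) (hF2 A)
    have het1 : (G.ectx (a, true)).count A ≤ 1 :=
      List.nodup_iff_count_le_one.mp
        (Pretensor.nodup_of_chain'_prec hF2 (hC2 (a, true) hot).2) A
    have hef1 : (G.ectx (a, false)).count A ≤ 1 :=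
      List.nodup_iff_count_le_one.mp
        (Pretensor.nodup_of_chain'_prec hF2 (hC2 (a, false) hof).2) A
    rw [Pretensor.nctx_drop, Pretensor.nctx_drop, Pretensor.ectx_drop, Pretensor.ectx_drop]
    by_cases hcase : A ∈ G.nctx (a, true) ∨ A ∉ G.nctx (a, false)
    · exact DropAux.core A (G.ectx (a, true)) (G.nctx (a, true)) (G.ectx (a, false))
        (G.nctx (a, false)) hdt hdf hnt1 hnf1 het1 hef1 hcase es.length es bs le_rfl h1 h2
    · push_neg at hcase
      obtain ⟨es', bs', g1, g2⟩ := DropAux.core A (G.ectx (a, false)) (G.nctx (a, false))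
        (G.ectx (a, true)) (G.nctx (a, true)) hdf hdt hnf1 hnt1 hef1 het1
        (Or.inl hcase.2) es.length es bs le_rfl h2 h1
      exact ⟨es', bs', g2, g1⟩
end

section
/- Effect of Copy on the contexts of the fresh copy: if a is an edge of !-tensor G with ectx_G(a) = [E_1,...,E_n] and nctx_G(a) = [N_1,...,N_m], and Copy is applied at box E_i (in the edge context), then ectx_{Copy_{E_i}(G)}(fr(a)) = [fr(E_1),...,fr(E_i),E_{i+1},...,E_n]; if instead Copy is applied at box N_i (in the node context), then ectx of fr(a) is [fr(E_1),...,fr(E_n)] and nctx is [fr(N_1),...,fr(N_i),N_{i+1},...,N_m]. -/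
namespace Bang

variable {E B S : Type}

set_option linter.unusedSectionVars false

section Aux
variable [DecidableEq E] [DecidableEq B]

theorem EdgeTerm.occ_rename (fe : E → E) (fb : B → B) (hfe : Function.Injective fe)
    (e : EdgeTerm E B) (a : E) (o : Bool) :
    (e.rename fe fb).occ (fe a, o) = e.occ (a, o) := by
  induction e <;>
    simp_all [EdgeTerm.rename, EdgeTerm.occ, Prod.ext_iff, hfe.eq_iff]

theorem EdgeTerm.ectx_rename (fe : E → E) (fb : B → B) (hfe : Function.Injective fe)
    (e : EdgeTerm E B) (a : E) (o : Bool) :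
    (e.rename fe fb).ectx (fe a, o) = (e.ectx (a, o)).map fb := by
  induction e <;>
    simp_all [EdgeTerm.rename, EdgeTerm.ectx, EdgeTerm.occ_rename fe fb hfe] <;>
    (try split) <;> simp

theorem EdgeTerm.occ_eq_false (e : EdgeTerm E B) (a : E) (o : Bool)
    (h : a ∉ e.edgeSet) : e.occ (a, o) = false := by
  induction e <;>
    simp_all [EdgeTerm.edgeSet, EdgeTerm.occ, Prod.ext_iff] <;>
    (rintro rfl; simp_all)

theorem EdgeTerm.one_le_countD (e : EdgeTerm E B) (d : E × Bool) :
    1 ≤ e.countD d ↔ e.occ d = true := by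
  induction e with
  | eps => simp [EdgeTerm.countD, EdgeTerm.occ]
  | out a => simp only [EdgeTerm.countD, EdgeTerm.occ]; split <;> simp_all
  | inn a => simp only [EdgeTerm.countD, EdgeTerm.occ]; split <;> simp_all
  | cw e A ih => simpa [EdgeTerm.countD, EdgeTerm.occ] using ih
  | acw e A ih => simpa [EdgeTerm.countD, EdgeTerm.occ] using ih
  | cat e f ihe ihf =>
      simp only [EdgeTerm.countD, EdgeTerm.occ, Bool.or_eq_true, ← ihe, ← ihf]; omega

theorem Pretensor.occ_rename (fe : E → E) (fb : B → B) (hfe : Function.Injective fe)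
    (G : Pretensor E B S) (a : E) (o : Bool) :
    (G.rename fe fb).occ (fe a, o) = G.occ (a, o) := by
  induction G <;>
    simp_all [Pretensor.rename, Pretensor.occ, Prod.ext_iff, hfe.eq_iff,
      EdgeTerm.occ_rename fe fb hfe]

theorem Pretensor.ectx_rename (fe : E → E) (fb : B → B) (hfe : Function.Injective fe)
    (G : Pretensor E B S) (a : E) (o : Bool) :
    (G.rename fe fb).ectx (fe a, o) = (G.ectx (a, o)).map fb := by
  induction G <;>
    simp_all [Pretensor.rename, Pretensor.ectx, Pretensor.occ_rename fe fb hfe,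
      EdgeTerm.ectx_rename fe fb hfe] <;>
    (try split) <;> simp_all

theorem Pretensor.nctx_rename (fe : E → E) (fb : B → B) (hfe : Function.Injective fe)
    (G : Pretensor E B S) (a : E) (o : Bool) :
    (G.rename fe fb).nctx (fe a, o) = (G.nctx (a, o)).map fb := by
  induction G <;>
    simp_all [Pretensor.rename, Pretensor.nctx, Pretensor.occ_rename fe fb hfe] <;>
    (try split) <;> simp_all

theorem Pretensor.occ_eq_false (G : Pretensor E B S) (a : E) (o : Bool)
    (h : a ∉ G.edgeSet) : G.occ (a, o) = false := by
  induction G <;>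
    simp_all [Pretensor.edgeSet, Pretensor.occ, Prod.ext_iff, EdgeTerm.occ_eq_false] <;>
    (rintro rfl; simp_all)

theorem Pretensor.one_le_countD (G : Pretensor E B S) (d : E × Bool) :
    1 ≤ G.countD d ↔ G.occ d = true := by
  induction G with
  | triv => simp [Pretensor.countD, Pretensor.occ]
  | idt a b =>
      simp only [Pretensor.countD, Pretensor.occ, Bool.or_eq_true]
      split <;> split <;> simp_all
  | atom φ e => simpa [Pretensor.countD, Pretensor.occ] using e.one_le_countD d
  | box G A ih => simpa [Pretensor.countD, Pretensor.occ] using ih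
  | prod G H ihG ihH =>
      simp only [Pretensor.countD, Pretensor.occ, Bool.or_eq_true, ← ihG, ← ihH]; omega

theorem EdgeTerm.copy_occ {fe : E → E} {fb : B → B} (hfe : Function.Injective fe)
    (A : B) (d : E × Bool) (e : EdgeTerm E B)
    (hC : e.countD d ≤ 1) (hS : fe d.1 ∉ e.edgeSet) :
    (e.copy A fe fb).occ (fe d.1, d.2) = (e.occ d && decide (A ∈ e.ectx d)) := by
  induction e with
  | eps => simp [EdgeTerm.copy, EdgeTerm.occ]
  | out a =>
      simp only [EdgeTerm.edgeSet, Set.mem_singleton_iff] at hS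
      simp [EdgeTerm.copy, EdgeTerm.occ, EdgeTerm.ectx, Prod.ext_iff, hS]
  | inn a =>
      simp only [EdgeTerm.edgeSet, Set.mem_singleton_iff] at hS
      simp [EdgeTerm.copy, EdgeTerm.occ, EdgeTerm.ectx, Prod.ext_iff, hS]
  | cw e C ih =>
      simp only [EdgeTerm.edgeSet] at hS
      simp only [EdgeTerm.countD] at hC
      rw [EdgeTerm.copy]
      by_cases hCA : C = A
      · subst hCA
        simp only [if_pos rfl, ↓reduceIte, EdgeTerm.occ, EdgeTerm.ectx]
        rw [EdgeTerm.occ_rename fe fb hfe e d.1 d.2, EdgeTerm.occ_eq_false e _ _ hS]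
        obtain h | h := Bool.eq_false_or_eq_true (e.occ d) <;> simp [h, Prod.mk.eta]
      · simp only [if_neg hCA, EdgeTerm.occ, EdgeTerm.ectx, ih hC hS]
        obtain h | h := Bool.eq_false_or_eq_true (e.occ d) <;> simp [h, Ne.symm hCA]
  | acw e C ih =>
      simp only [EdgeTerm.edgeSet] at hS
      simp only [EdgeTerm.countD] at hC
      rw [EdgeTerm.copy]
      by_cases hCA : C = A
      · subst hCA
        simp only [if_pos rfl, ↓reduceIte, EdgeTerm.occ, EdgeTerm.ectx]
        rw [EdgeTerm.occ_rename fe fb hfe e d.1 d.2, EdgeTerm.occ_eq_false e _ _ hS]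
        obtain h | h := Bool.eq_false_or_eq_true (e.occ d) <;> simp [h, Prod.mk.eta]
      · simp only [if_neg hCA, EdgeTerm.occ, EdgeTerm.ectx, ih hC hS]
        obtain h | h := Bool.eq_false_or_eq_true (e.occ d) <;> simp [h, Ne.symm hCA]
  | cat e f ihe ihf =>
      simp only [EdgeTerm.edgeSet, Set.mem_union, not_or] at hS
      simp only [EdgeTerm.countD] at hC
      rw [EdgeTerm.copy]
      simp only [EdgeTerm.occ, EdgeTerm.ectx,
        ihe (by omega) hS.1, ihf (by omega) hS.2]
      obtain h | h := Bool.eq_false_or_eq_true (e.occ d)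
      · have hf : f.occ d = false := by
          have h1 : 1 ≤ e.countD d := (e.one_le_countD d).2 h
          have : ¬ (1 ≤ f.countD d) := by omega
          rw [f.one_le_countD d] at this; simpa using this
        simp [h, hf]
      · simp [h]

theorem Pretensor.copy_occ {fe : E → E} {fb : B → B} (hfe : Function.Injective fe)
    (A : B) (d : E × Bool) (G : Pretensor E B S)
    (hC : G.countD d ≤ 1) (hS : fe d.1 ∉ G.edgeSet) :
    (G.copy A fe fb).occ (fe d.1, d.2)
      = (G.occ d && decide (A ∈ G.ectx d ++ G.nctx d)) := by
  induction G with
  | triv => simp [Pretensor.copy, Pretensor.occ]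
  | idt a b =>
      simp only [Pretensor.edgeSet, Set.mem_insert_iff, Set.mem_singleton_iff, not_or] at hS
      simp [Pretensor.copy, Pretensor.occ, Pretensor.ectx, Pretensor.nctx, Prod.ext_iff,
        hS.1, hS.2]
  | atom φ e =>
      simp only [Pretensor.copy, Pretensor.occ, Pretensor.ectx, Pretensor.nctx,
        List.append_nil]
      exact EdgeTerm.copy_occ hfe A d e hC hS
  | box H C ih =>
      simp only [Pretensor.edgeSet] at hS
      simp only [Pretensor.countD] at hC
      rw [Pretensor.copy]
      by_cases hCA : C = A
      · subst hCA
        simp only [if_pos rfl, ↓reduceIte, Pretensor.occ, Pretensor.ectx, Pretensor.nctx,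
          Pretensor.occ_rename fe fb hfe H d.1 d.2, Pretensor.occ_eq_false H _ _ hS]
        obtain h | h := Bool.eq_false_or_eq_true (H.occ d) <;> simp [h, Prod.mk.eta]
      · simp only [if_neg hCA, Pretensor.occ, Pretensor.ectx, Pretensor.nctx, ih hC hS]
        obtain h | h := Bool.eq_false_or_eq_true (H.occ d) <;> simp [h, Ne.symm hCA]
  | prod G H ihG ihH =>
      simp only [Pretensor.edgeSet, Set.mem_union, not_or] at hS
      simp only [Pretensor.countD] at hC
      rw [Pretensor.copy]
      simp only [Pretensor.occ, Pretensor.ectx, Pretensor.nctx,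
        ihG (by omega) hS.1, ihH (by omega) hS.2]
      obtain h | h := Bool.eq_false_or_eq_true (G.occ d)
      · have hf : H.occ d = false := by
          have h1 : 1 ≤ G.countD d := (G.one_le_countD d).2 h
          have : ¬ (1 ≤ H.countD d) := by omega
          rw [H.one_le_countD d] at this; simpa using this
        simp [h, hf]
      · simp [h]

theorem aux_concat_eq {β : Type _} {A : β} {t l1 l2 : List β}
    (h : t ++ [A] = l1 ++ A :: l2) (hA : A ∉ l2) : l2 = [] ∧ t = l1 := by
  rcases List.eq_nil_or_concat l2 with rfl | ⟨l2', c, rfl⟩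
  · exact ⟨rfl, by simpa using h⟩
  · exfalso
    rw [List.concat_eq_append] at h hA
    rw [show l1 ++ A :: (l2' ++ [c]) = (l1 ++ A :: l2') ++ [c] by simp] at h
    have h2 := List.append_inj' h rfl
    have hcA : c = A := by simpa using h2.2.symm
    exact hA (by simp [hcA])

theorem aux_concat_ne {β : Type _} {A C : β} {t l1 l2 : List β}
    (h : t ++ [C] = l1 ++ A :: l2) (hne : A ≠ C) (hA : A ∉ l2) :
    ∃ l2', l2 = l2' ++ [C] ∧ t = l1 ++ A :: l2' ∧ A ∉ l2' := by
  rcases List.eq_nil_or_concat l2 with rfl | ⟨l2', c, rfl⟩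
  · have h2 := List.append_inj' h rfl
    exact absurd (by simpa using h2.2.symm) hne
  · rw [List.concat_eq_append] at h hA
    rw [show l1 ++ A :: (l2' ++ [c]) = (l1 ++ A :: l2') ++ [c] by simp] at h
    have h2 := List.append_inj' h rfl
    have hc : C = c := by simpa using h2.2
    subst hc
    exact ⟨l2', List.concat_eq_append, h2.1, fun hm => hA (by simp [hm])⟩

theorem EdgeTerm.copy_ectx {fe : E → E} {fb : B → B} (hfe : Function.Injective fe)
    (A : B) (d : E × Bool) (e : EdgeTerm E B)
    (hC : e.countD d ≤ 1) (hS : fe d.1 ∉ e.edgeSet) (hocc : e.occ d = true)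
    (l1 l2 : List B) (hsplit : e.ectx d = l1 ++ A :: l2) (hA : A ∉ l2) :
    (e.copy A fe fb).ectx (fe d.1, d.2) = (l1 ++ [A]).map fb ++ l2 := by
  induction e generalizing l1 l2 with
  | eps => simp [EdgeTerm.occ] at hocc
  | out a => simp [EdgeTerm.ectx] at hsplit
  | inn a => simp [EdgeTerm.ectx] at hsplit
  | cw e C ih =>
      simp only [EdgeTerm.edgeSet] at hS
      simp only [EdgeTerm.countD] at hC
      simp only [EdgeTerm.occ] at hocc
      simp only [EdgeTerm.ectx, hocc, if_true] at hsplit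
      rw [EdgeTerm.copy]
      by_cases hCA : C = A
      · subst hCA
        obtain ⟨rfl, rfl⟩ := aux_concat_eq hsplit hA
        simp [EdgeTerm.ectx, EdgeTerm.occ, EdgeTerm.occ_eq_false e _ _ hS,
          EdgeTerm.occ_rename fe fb hfe e d.1 d.2, Prod.mk.eta, hocc,
          EdgeTerm.ectx_rename fe fb hfe e d.1 d.2]
      · obtain ⟨l2', rfl, hsp', hA'⟩ :=
          aux_concat_ne hsplit (fun h => hCA h.symm) hA
        have ho : (e.copy A fe fb).occ (fe d.1, d.2) = true := by
          rw [EdgeTerm.copy_occ hfe A d e hC hS]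
          simp [hocc, hsp']
        simp only [if_neg hCA, EdgeTerm.ectx, ho, if_true]
        rw [ih hC hS hocc l1 l2' hsp' hA']
        simp
  | acw e C ih =>
      simp only [EdgeTerm.edgeSet] at hS
      simp only [EdgeTerm.countD] at hC
      simp only [EdgeTerm.occ] at hocc
      simp only [EdgeTerm.ectx, hocc, if_true] at hsplit
      rw [EdgeTerm.copy]
      by_cases hCA : C = A
      · subst hCA
        obtain ⟨rfl, rfl⟩ := aux_concat_eq hsplit hA
        simp [EdgeTerm.ectx, EdgeTerm.occ, EdgeTerm.occ_eq_false e _ _ hS,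
          EdgeTerm.occ_rename fe fb hfe e d.1 d.2, Prod.mk.eta, hocc,
          EdgeTerm.ectx_rename fe fb hfe e d.1 d.2]
      · obtain ⟨l2', rfl, hsp', hA'⟩ :=
          aux_concat_ne hsplit (fun h => hCA h.symm) hA
        have ho : (e.copy A fe fb).occ (fe d.1, d.2) = true := by
          rw [EdgeTerm.copy_occ hfe A d e hC hS]
          simp [hocc, hsp']
        simp only [if_neg hCA, EdgeTerm.ectx, ho, if_true]
        rw [ih hC hS hocc l1 l2' hsp' hA']
        simp
  | cat e f ihe ihf =>
      simp only [EdgeTerm.edgeSet, Set.mem_union, not_or] at hS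
      simp only [EdgeTerm.countD] at hC
      simp only [EdgeTerm.occ, Bool.or_eq_true] at hocc
      rw [EdgeTerm.copy]
      simp only [EdgeTerm.ectx] at hsplit ⊢
      obtain he | he := Bool.eq_false_or_eq_true (e.occ d)
      · rw [if_pos he] at hsplit
        have ho : (e.copy A fe fb).occ (fe d.1, d.2) = true := by
          rw [EdgeTerm.copy_occ hfe A d e (by omega) hS.1]
          simp [he, hsplit]
        rw [if_pos ho]
        exact ihe (by omega) hS.1 he l1 l2 hsplit hA
      · have hf : f.occ d = true := by
          rcases hocc with h | h
          · rw [he] at h; exact absurd h (by simp)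
          · exact h
        rw [if_neg (by simp [he]) ] at hsplit
        have ho : (e.copy A fe fb).occ (fe d.1, d.2) = false := by
          rw [EdgeTerm.copy_occ hfe A d e (by omega) hS.1, he]; simp
        rw [if_neg (by simp [ho])]
        exact ihf (by omega) hS.2 hf l1 l2 hsplit hA

theorem Pretensor.copy_ectx {fe : E → E} {fb : B → B} (hfe : Function.Injective fe)
    (A : B) (d : E × Bool) (G : Pretensor E B S)
    (hC : G.countD d ≤ 1) (hS : fe d.1 ∉ G.edgeSet) (hocc : G.occ d = true)
    (hnA : A ∉ G.nctx d)
    (l1 l2 : List B) (hsplit : G.ectx d = l1 ++ A :: l2) (hA : A ∉ l2) :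
    (G.copy A fe fb).ectx (fe d.1, d.2) = (l1 ++ [A]).map fb ++ l2 := by
  induction G generalizing l1 l2 with
  | triv => simp [Pretensor.occ] at hocc
  | idt a b => simp [Pretensor.ectx] at hsplit
  | atom φ e =>
      simp only [Pretensor.copy, Pretensor.ectx] at *
      exact EdgeTerm.copy_ectx hfe A d e hC hS hocc l1 l2 hsplit hA
  | box H C ih =>
      simp only [Pretensor.edgeSet] at hS
      simp only [Pretensor.countD] at hC
      simp only [Pretensor.occ] at hocc
      simp only [Pretensor.ectx] at hsplit ⊢
      simp only [Pretensor.nctx, hocc, if_true] at hnA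
      have hCA : C ≠ A := by
        intro h; exact hnA (by simp [h])
      have hnA' : A ∉ H.nctx d := fun h => hnA (by simp [h])
      rw [Pretensor.copy, if_neg hCA]
      simpa only [Pretensor.ectx] using ih hC hS hocc hnA' l1 l2 hsplit hA
  | prod G H ihG ihH =>
      simp only [Pretensor.edgeSet, Set.mem_union, not_or] at hS
      simp only [Pretensor.countD] at hC
      simp only [Pretensor.occ, Bool.or_eq_true] at hocc
      rw [Pretensor.copy]
      simp only [Pretensor.ectx, Pretensor.nctx] at hsplit hnA ⊢
      obtain he | he := Bool.eq_false_or_eq_true (G.occ d)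
      · rw [if_pos he] at hsplit hnA
        have ho : (G.copy A fe fb).occ (fe d.1, d.2) = true := by
          rw [Pretensor.copy_occ hfe A d G (by omega) hS.1]
          simp [he, hsplit]
        rw [if_pos ho]
        exact ihG (by omega) hS.1 he hnA l1 l2 hsplit hA
      · have hf : H.occ d = true := by
          rcases hocc with h | h
          · rw [he] at h; exact absurd h (by simp)
          · exact h
        rw [if_neg (by simp [he])] at hsplit hnA
        have ho : (G.copy A fe fb).occ (fe d.1, d.2) = false := by
          rw [Pretensor.copy_occ hfe A d G (by omega) hS.1, he]; simp
        rw [if_neg (by simp [ho])]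
        exact ihH (by omega) hS.2 hf hnA l1 l2 hsplit hA

theorem Pretensor.copy_nctx {fe : E → E} {fb : B → B} (hfe : Function.Injective fe)
    (A : B) (d : E × Bool) (G : Pretensor E B S)
    (hC : G.countD d ≤ 1) (hS : fe d.1 ∉ G.edgeSet) (hocc : G.occ d = true)
    (heA : A ∉ G.ectx d)
    (l1 l2 : List B) (hsplit : G.nctx d = l1 ++ A :: l2) (hA : A ∉ l2) :
    (G.copy A fe fb).ectx (fe d.1, d.2) = (G.ectx d).map fb ∧
    (G.copy A fe fb).nctx (fe d.1, d.2) = (l1 ++ [A]).map fb ++ l2 := by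
  induction G generalizing l1 l2 with
  | triv => simp [Pretensor.occ] at hocc
  | idt a b => simp [Pretensor.nctx] at hsplit
  | atom φ e => simp [Pretensor.nctx] at hsplit
  | box H C ih =>
      simp only [Pretensor.edgeSet] at hS
      simp only [Pretensor.countD] at hC
      simp only [Pretensor.occ] at hocc
      simp only [Pretensor.ectx] at heA ⊢
      simp only [Pretensor.nctx, hocc, if_true] at hsplit
      rw [Pretensor.copy]
      by_cases hCA : C = A
      · subst hCA
        obtain ⟨rfl, rfl⟩ := aux_concat_eq hsplit hA
        have h1 : (Pretensor.box H C).occ (E := E) (B := B) (S := S) (fe d.1, d.2) = false := by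
          simpa [Pretensor.occ] using Pretensor.occ_eq_false H (fe d.1) d.2 hS
        constructor
        · simp only [if_pos rfl, ↓reduceIte, Pretensor.ectx, h1]
          simp [Pretensor.ectx, Pretensor.ectx_rename fe fb hfe H d.1 d.2]
        · simp only [if_pos rfl, ↓reduceIte, Pretensor.nctx, h1, if_neg, Bool.false_eq_true,
            not_false_iff, if_false]
          simp [Pretensor.nctx, Pretensor.occ_rename fe fb hfe H d.1 d.2, Prod.mk.eta, hocc,
            Pretensor.nctx_rename fe fb hfe H d.1 d.2]
      · obtain ⟨l2', rfl, hsp', hA'⟩ :=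
          aux_concat_ne hsplit (fun h => hCA h.symm) hA
        rw [if_neg hCA]
        have ho : (H.copy A fe fb).occ (fe d.1, d.2) = true := by
          rw [Pretensor.copy_occ hfe A d H hC hS]
          simp [hocc, hsp']
        obtain ⟨ih1, ih2⟩ := ih hC hS hocc heA l1 l2' hsp' hA'
        constructor
        · simpa only [Pretensor.ectx] using ih1
        · simp only [Pretensor.nctx, ho, if_true, ih2]
          simp
  | prod G H ihG ihH =>
      simp only [Pretensor.edgeSet, Set.mem_union, not_or] at hS
      simp only [Pretensor.countD] at hC
      simp only [Pretensor.occ, Bool.or_eq_true] at hocc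
      rw [Pretensor.copy]
      simp only [Pretensor.ectx, Pretensor.nctx] at hsplit heA ⊢
      obtain he | he := Bool.eq_false_or_eq_true (G.occ d)
      · rw [if_pos he] at hsplit heA
        have ho : (G.copy A fe fb).occ (fe d.1, d.2) = true := by
          rw [Pretensor.copy_occ hfe A d G (by omega) hS.1]
          simp [he, hsplit]
        rw [if_pos ho, if_pos ho, if_pos he]
        exact ihG (by omega) hS.1 he heA l1 l2 hsplit hA
      · have hf : H.occ d = true := by
          rcases hocc with h | h
          · rw [he] at h; exact absurd h (by simp)
          · exact h
        rw [if_neg (by simp [he])] at hsplit heA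
        have ho : (G.copy A fe fb).occ (fe d.1, d.2) = false := by
          rw [Pretensor.copy_occ hfe A d G (by omega) hS.1, he]; simp
        have hne1 : ¬ ((G.copy A fe fb).occ (fe d.1, d.2) = true) := by simp [ho]
        have hne2 : ¬ (G.occ d = true) := by simp [he]
        rw [if_neg hne1, if_neg hne1, if_neg hne2]
        exact ihH (by omega) hS.2 hf heA l1 l2 hsplit hA

def Pretensor.psize : Pretensor E B S → Nat
  | .box G _ => G.psize + 1
  | .prod G H => G.psize + H.psize + 1
  | _ => 1

def Pretensor.bsize : Pretensor E B S → B → Nat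
  | .box G C, A => (if C = A then G.psize + 1 else 0) + G.bsize A
  | .prod G H, A => G.bsize A + H.bsize A
  | _, _ => 0

theorem Pretensor.countBox_of_topBoxes {G : Pretensor E B S} {A : B}
    (h : A ∈ G.topBoxes) : 1 ≤ G.countBox A := by
  induction G with
  | box H C ih =>
      simp only [Pretensor.topBoxes, Set.mem_singleton_iff] at h
      simp [Pretensor.countBox, h]
  | prod G H ihG ihH =>
      simp only [Pretensor.topBoxes, Set.mem_union] at h
      rcases h with h | h
      · have := ihG h; simp only [Pretensor.countBox]; omega
      · have := ihH h; simp only [Pretensor.countBox]; omega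
  | triv => simp [Pretensor.topBoxes] at h
  | idt a b => simp [Pretensor.topBoxes] at h
  | atom φ e => simp [Pretensor.topBoxes] at h

theorem Pretensor.countBox_of_prec_s18 {G : Pretensor E B S} {A C : B}
    (h : G.prec A C) : 1 ≤ G.countBox A ∧ 1 ≤ G.countBox C := by
  induction G with
  | box H C' ih =>
      simp only [Pretensor.prec] at h
      rcases h with ⟨rfl, hT⟩ | h
      · have := Pretensor.countBox_of_topBoxes hT
        constructor <;> simp only [Pretensor.countBox] <;> split <;> (try omega) <;> simp_all
      · have := ih h
        constructor <;> simp only [Pretensor.countBox] <;> split <;> (try omega) <;> simp_all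
  | prod G H ihG ihH =>
      simp only [Pretensor.prec] at h
      rcases h with h | h
      · have := ihG h; constructor <;> simp only [Pretensor.countBox] <;> omega
      · have := ihH h; constructor <;> simp only [Pretensor.countBox] <;> omega
  | triv => simp [Pretensor.prec] at h
  | idt a b => simp [Pretensor.prec] at h
  | atom φ e => simp [Pretensor.prec] at h

theorem Pretensor.bsize_eq_zero {G : Pretensor E B S} {A : B}
    (h : G.countBox A = 0) : G.bsize A = 0 := by
  induction G with
  | box H C ih =>
      simp only [Pretensor.countBox] at h
      simp only [Pretensor.bsize]
      have h1 : ¬ (C = A) := by intro hc; rw [if_pos hc] at h; omega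
      simp [h1, ih (by omega)]
  | prod G H ihG ihH =>
      simp only [Pretensor.countBox] at h
      simp [Pretensor.bsize, ihG (by omega), ihH (by omega)]
  | triv => simp [Pretensor.bsize]
  | idt a b => simp [Pretensor.bsize]
  | atom φ e => simp [Pretensor.bsize]

theorem Pretensor.bsize_le {G : Pretensor E B S} {A : B}
    (h : G.countBox A ≤ 1) : G.bsize A ≤ G.psize := by
  induction G with
  | box H C ih =>
      simp only [Pretensor.countBox] at h
      simp only [Pretensor.bsize, Pretensor.psize]
      by_cases hc : C = A
      · rw [if_pos hc] at h ⊢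
        have h0 : H.countBox A = 0 := by omega
        rw [Pretensor.bsize_eq_zero h0]
        try omega
      · simp only [if_neg hc]
        have := ih (by split at h <;> omega)
        omega
  | prod G H ihG ihH =>
      simp only [Pretensor.countBox] at h
      simp only [Pretensor.bsize, Pretensor.psize]
      have := ihG (by omega); have := ihH (by omega); omega
  | triv => simp [Pretensor.bsize, Pretensor.psize]
  | idt a b => simp [Pretensor.bsize, Pretensor.psize]
  | atom φ e => simp [Pretensor.bsize, Pretensor.psize]

theorem Pretensor.bsize_lt {G : Pretensor E B S} {A C : B}
    (hF2 : ∀ X : B, G.countBox X ≤ 1) (h : G.prec A C) :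
    G.bsize A < G.bsize C := by
  induction G with
  | box H C' ih =>
      have hF2' : ∀ X : B, H.countBox X ≤ 1 := by
        intro X; have := hF2 X; simp only [Pretensor.countBox] at this
        split at this <;> omega
      simp only [Pretensor.prec] at h
      simp only [Pretensor.bsize]
      rcases h with ⟨rfl, hT⟩ | h
      · have h1 : 1 ≤ H.countBox A := Pretensor.countBox_of_topBoxes hT
        have hCA : ¬ (C = A) := by
          intro hc
          have h2 := hF2 A
          simp only [Pretensor.countBox, if_pos hc] at h2
          omega
        have h2 : H.bsize A ≤ H.psize := Pretensor.bsize_le (hF2' A)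
        rw [if_neg hCA, if_pos rfl]
        omega
      · obtain ⟨hA1, hC1⟩ := Pretensor.countBox_of_prec_s18 h
        have hCA : ¬ (C' = A) := by
          intro hc
          have h2 := hF2 A
          simp only [Pretensor.countBox, if_pos hc] at h2
          omega
        have := ih hF2' h
        simp only [if_neg hCA]
        split <;> omega
  | prod G H ihG ihH =>
      have hF2G : ∀ X : B, G.countBox X ≤ 1 := by
        intro X; have := hF2 X; simp only [Pretensor.countBox] at this; omega
      have hF2H : ∀ X : B, H.countBox X ≤ 1 := by
        intro X; have := hF2 X; simp only [Pretensor.countBox] at this; omega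
      simp only [Pretensor.prec] at h
      simp only [Pretensor.bsize]
      rcases h with h | h
      · obtain ⟨hA1, hC1⟩ := Pretensor.countBox_of_prec_s18 h
        have hA0 : H.countBox A = 0 := by have := hF2 A; simp [Pretensor.countBox] at this; omega
        have hC0 : H.countBox C = 0 := by have := hF2 C; simp [Pretensor.countBox] at this; omega
        rw [Pretensor.bsize_eq_zero hA0, Pretensor.bsize_eq_zero hC0]
        have := ihG hF2G h; omega
      · obtain ⟨hA1, hC1⟩ := Pretensor.countBox_of_prec_s18 h
        have hA0 : G.countBox A = 0 := by have := hF2 A; simp [Pretensor.countBox] at this; omega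
        have hC0 : G.countBox C = 0 := by have := hF2 C; simp [Pretensor.countBox] at this; omega
        rw [Pretensor.bsize_eq_zero hA0, Pretensor.bsize_eq_zero hC0]
        have := ihH hF2H h; omega
  | triv => simp [Pretensor.prec] at h
  | idt a b => simp [Pretensor.prec] at h
  | atom φ e => simp [Pretensor.prec] at h

theorem Pretensor.ectx_nodup {G : Pretensor E B S} {d : E × Bool}
    (hF2 : ∀ X : B, G.countBox X ≤ 1) (hchain : (G.ectx d).Chain' G.prec) :
    (G.ectx d).Nodup := by
  have h2 : (G.ectx d).Chain' (fun a c => G.bsize a < G.bsize c) :=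
    hchain.imp (fun a c h => Pretensor.bsize_lt hF2 h)
  haveI : IsTrans B (fun a c => G.bsize a < G.bsize c) := ⟨fun _ _ _ => Nat.lt_trans⟩
  have h3 := List.isChain_iff_pairwise.mp h2
  exact h3.imp (fun h heq => by subst heq; omega)

theorem Pretensor.nctx_count_le (G : Pretensor E B S) (d : E × Bool) (A : B) :
    (G.nctx d).count A ≤ G.countBox A := by
  induction G with
  | box H C ih =>
      simp only [Pretensor.nctx, Pretensor.countBox]
      split
      · rw [List.count_append]
        have : List.count A [C] = if C = A then 1 else 0 := by
          by_cases hc : C = A <;> simp [List.count_cons, hc]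
        omega
      · simp
  | prod G H ihG ihH =>
      simp only [Pretensor.nctx, Pretensor.countBox]
      split <;> omega
  | triv => simp [Pretensor.nctx, Pretensor.countBox]
  | idt a b => simp [Pretensor.nctx, Pretensor.countBox]
  | atom φ e => simp [Pretensor.nctx, Pretensor.countBox]

theorem Pretensor.nctx_nodup {G : Pretensor E B S} {d : E × Bool}
    (hF2 : ∀ X : B, G.countBox X ≤ 1) : (G.nctx d).Nodup :=
  List.nodup_iff_count_le_one.mpr fun A =>
    le_trans (Pretensor.nctx_count_le G d A) (hF2 A)

theorem nodup_get_not_mem_drop {α : Type _} {l : List α} (h : l.Nodup) {i : Nat}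
    (hi : i < l.length) : l[i] ∉ l.drop (i + 1) := by
  intro hm
  obtain ⟨j, hj, hje⟩ := List.mem_iff_getElem.mp hm
  rw [List.getElem_drop] at hje
  have := (List.Nodup.getElem_inj_iff h).mp hje
  omega

end Aux

end Bang

open Bang

/-- effect of Copy on the contexts of the fresh copy fr(a) of an
edge a: copying at the i-th box of the edge context freshly renames the first
i entries of the edge context; copying at the i-th box of the node context
freshly renames the whole edge context and the first i entries of the node
context. -/
theorem copy_ctx_effect {E B S : Type} [DecidableEq E] [DecidableEq B]
    (G : Pretensor E B S) (hG : G.WF) (fe : E → E) (fb : B → B)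
    (hfr : IsFresh fe fb G) (d : E × Bool) (hocc : G.occ d = true) :
    (∀ i (h : i < (G.ectx d).length),
      (G.copy ((G.ectx d).get ⟨i, h⟩) fe fb).ectx (fe d.1, d.2)
        = ((G.ectx d).take (i + 1)).map fb ++ (G.ectx d).drop (i + 1)) ∧
    (∀ i (h : i < (G.nctx d).length),
      (G.copy ((G.nctx d).get ⟨i, h⟩) fe fb).ectx (fe d.1, d.2) = (G.ectx d).map fb ∧
      (G.copy ((G.nctx d).get ⟨i, h⟩) fe fb).nctx (fe d.1, d.2)
        = ((G.nctx d).take (i + 1)).map fb ++ (G.nctx d).drop (i + 1)) := by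
  obtain ⟨hF1, hF2, hC1, hC2, hC3⟩ := hG
  have hfe : Function.Injective fe := hfr.1.injective
  have hC : G.countD d ≤ 1 := hF1 d
  have hd1 : d.1 ∈ G.edgeSet := by
    by_contra hmem
    have h0 := Pretensor.occ_eq_false G d.1 d.2 hmem
    rw [Prod.mk.eta] at h0
    rw [h0] at hocc
    exact absurd hocc (by simp)
  have hS : fe d.1 ∉ G.edgeSet := by
    intro hmem
    have hx : fe d.1 ∈ G.edgeSet ∩ (fe '' G.edgeSet) := ⟨hmem, ⟨d.1, hd1, rfl⟩⟩
    rw [hfr.2.2.1] at hx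
    exact hx
  have hchain : (G.ectx d).Chain' G.prec := (hC2 d hocc).2
  have hect : (G.ectx d).Nodup := Pretensor.ectx_nodup hF2 hchain
  have hnct : (G.nctx d).Nodup := Pretensor.nctx_nodup hF2
  constructor
  · intro i h
    set A := (G.ectx d).get ⟨i, h⟩ with hAdef
    have hAi : A = (G.ectx d)[i] := rfl
    have hsplit : G.ectx d = (G.ectx d).take i ++ A :: (G.ectx d).drop (i + 1) := by
      rw [hAi, ← List.drop_eq_getElem_cons h, List.take_append_drop]
    have hA : A ∉ (G.ectx d).drop (i + 1) := by
      rw [hAi]; exact nodup_get_not_mem_drop hect h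
    have hmemA : A ∈ G.ectx d := by rw [hAi]; exact List.getElem_mem h
    have hnA : A ∉ G.nctx d := hC1 d hocc A hmemA
    have hres := Pretensor.copy_ectx (fb := fb) hfe A d G hC hS hocc hnA _ _ hsplit hA
    rw [hres]
    congr 1
    rw [List.take_succ, List.getElem?_eq_getElem h]
    simp [hAi]
  · intro i h
    set A := (G.nctx d).get ⟨i, h⟩ with hAdef
    have hAi : A = (G.nctx d)[i] := rfl
    have hsplit : G.nctx d = (G.nctx d).take i ++ A :: (G.nctx d).drop (i + 1) := by
      rw [hAi, ← List.drop_eq_getElem_cons h, List.take_append_drop]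
    have hA : A ∉ (G.nctx d).drop (i + 1) := by
      rw [hAi]; exact nodup_get_not_mem_drop hnct h
    have hmemA : A ∈ G.nctx d := by rw [hAi]; exact List.getElem_mem h
    have heA : A ∉ G.ectx d := fun hmem => hC1 d hocc A hmem hmemA
    obtain ⟨h1, h2⟩ := Pretensor.copy_nctx (fb := fb) hfe A d G hC hS hocc heA _ _ hsplit hA
    refine ⟨h1, ?_⟩
    rw [h2]
    congr 1
    rw [List.take_succ, List.getElem?_eq_getElem h]
    simp [hAi]
end
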